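/- arXiv:1605.04489 — 2 statements merged into one kernel-verified Lean document; each statement's English description precedes it below -/
import Mathlib

section
/- For the strict distributive law λ† of the copresheaf 2-monad 𝔓† over the presheaf 2-monad 𝔓 given by λ†_X = ((y_X)_†)^!·y_{P†PX}:P†PX→PP†X, there is a 2-isomorphism (λ†,Q)-Alg ≅ Mon(Q-Dist): lax λ†-algebra structures p:P†X→PX on a Q-category X correspond bijectively to Q-distributors α:X⇸X with 1_X^* ≤ α and α∘α ≤ α (via p = α↓, α↓τ = τ↘α), and lax λ†-homomorphisms correspond exactly to the morphisms of Mon(Q-Dist). -/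
/-!
Common framework: quantaloids, `Q`-categories, `Q`-functors, `Q`-distributors,
(co)presheaf constructions, 2-monads on `Q`-Cat, lax distributive laws over the
presheaf 2-monad, and lax extensions to `Q`-Dist.
-/

set_option autoImplicit false

universe u

namespace QT

/-- A (small) quantaloid: a category enriched in complete lattices, with
composition preserving suprema in each variable. -/
structure Quantaloid : Type (u + 1) where
  Obj : Type u
  Hom : Obj → Obj → Type u
  lat : ∀ a b, CompleteLattice (Hom a b)
  comp : ∀ {a b c}, Hom b c → Hom a b → Hom a c
  idm : ∀ a, Hom a a
  comp_assoc : ∀ {a b c d} (w : Hom c d) (v : Hom b c) (u : Hom a b),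
    comp (comp w v) u = comp w (comp v u)
  comp_idm : ∀ {a b} (u : Hom a b), comp u (idm a) = u
  idm_comp : ∀ {a b} (u : Hom a b), comp (idm b) u = u
  comp_sSup : ∀ {a b c} (v : Hom b c) (S : Set (Hom a b)),
    comp v (sSup S) = ⨆ u ∈ S, comp v u
  sSup_comp : ∀ {a b c} (S : Set (Hom b c)) (u : Hom a b),
    comp (sSup S) u = ⨆ v ∈ S, comp v u

attribute [instance] Quantaloid.lat

namespace Quantaloid

variable {Q : Quantaloid.{u}}

theorem comp_iSup {a b c : Q.Obj} (v : Q.Hom b c) {ι : Sort*} (f : ι → Q.Hom a b) :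
    Q.comp v (⨆ i, f i) = ⨆ i, Q.comp v (f i) := by
  rw [iSup, Q.comp_sSup, iSup_range]

theorem iSup_comp {a b c : Q.Obj} {ι : Sort*} (f : ι → Q.Hom b c) (u : Q.Hom a b) :
    Q.comp (⨆ i, f i) u = ⨆ i, Q.comp (f i) u := by
  rw [iSup, Q.sSup_comp, iSup_range]

theorem comp_le_comp {a b c : Q.Obj} {v v' : Q.Hom b c} {u u' : Q.Hom a b}
    (hv : v ≤ v') (hu : u ≤ u') : Q.comp v u ≤ Q.comp v' u' := by
  have h1 : Q.comp v' u ≤ Q.comp v' u' := by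
    have h := Q.comp_sSup v' {u, u'}
    rw [sSup_pair, sup_eq_right.mpr hu] at h
    rw [h]
    exact le_biSup (fun x => Q.comp v' x) (Set.mem_insert _ _)
  have h2 : Q.comp v u ≤ Q.comp v' u := by
    have h := Q.sSup_comp {v, v'} u
    rw [sSup_pair, sup_eq_right.mpr hv] at h
    rw [h]
    exact le_biSup (fun x => Q.comp x u) (Set.mem_insert _ _)
  exact le_trans h2 h1

/-- Internal hom `w ↙ u` (right adjoint to `- ∘ u`). -/
def lda {a b c : Q.Obj} (w : Q.Hom a c) (u : Q.Hom a b) : Q.Hom b c :=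
  sSup {v | Q.comp v u ≤ w}

/-- Internal hom `v ↘ w` (right adjoint to `v ∘ -`). -/
def rda {a b c : Q.Obj} (v : Q.Hom b c) (w : Q.Hom a c) : Q.Hom a b :=
  sSup {u | Q.comp v u ≤ w}

theorem le_lda {a b c : Q.Obj} {v : Q.Hom b c} {u : Q.Hom a b} {w : Q.Hom a c} :
    Q.comp v u ≤ w ↔ v ≤ lda w u := by
  constructor
  · exact fun h => le_sSup h
  · intro h
    calc Q.comp v u ≤ Q.comp (lda w u) u := comp_le_comp h le_rfl
      _ ≤ w := by
          rw [lda, Q.sSup_comp]; exact iSup₂_le fun v' hv' => hv'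

theorem le_rda {a b c : Q.Obj} {v : Q.Hom b c} {u : Q.Hom a b} {w : Q.Hom a c} :
    Q.comp v u ≤ w ↔ u ≤ rda v w := by
  constructor
  · exact fun h => le_sSup h
  · intro h
    calc Q.comp v u ≤ Q.comp v (rda v w) := comp_le_comp le_rfl h
      _ ≤ w := by
          rw [rda, Q.comp_sSup]; exact iSup₂_le fun u' hu' => hu'

end Quantaloid

variable {Q : Quantaloid.{u}}

/-- `Q`-relations between families of sets indexed by the objects of `Q`
(i.e. sets over `ob Q`, presented fibrewise). -/
abbrev QRel (Q : Quantaloid.{u}) (X Y : Q.Obj → Type u) : Type u :=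
  ∀ p q, X p → Y q → Q.Hom p q

/-- Composition of `Q`-relations. -/
def QRel.comp {X Y Z : Q.Obj → Type u} (ψ : QRel Q Y Z) (φ : QRel Q X Y) : QRel Q X Z :=
  fun p r x z => ⨆ q, ⨆ y : Y q, Q.comp (ψ q r y z) (φ p q x y)

theorem QRel.comp_mono {X Y Z : Q.Obj → Type u} {ψ ψ' : QRel Q Y Z} {φ φ' : QRel Q X Y}
    (h1 : ψ ≤ ψ') (h2 : φ ≤ φ') : QRel.comp ψ φ ≤ QRel.comp ψ' φ' := by
  intro p r x z
  exact iSup_mono fun q => iSup_mono fun y =>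
    Quantaloid.comp_le_comp (h1 q r y z) (h2 p q x y)

theorem QRel.comp_assoc {W X Y Z : Q.Obj → Type u}
    (χ : QRel Q Y Z) (ψ : QRel Q X Y) (φ : QRel Q W X) :
    QRel.comp (QRel.comp χ ψ) φ = QRel.comp χ (QRel.comp ψ φ) := by
  funext p s w z
  simp only [QRel.comp, Quantaloid.iSup_comp, Quantaloid.comp_iSup]
  apply le_antisymm
  · exact iSup₂_le fun q x => iSup₂_le fun r y =>
      le_iSup_of_le r (le_iSup_of_le y (le_iSup_of_le q (le_iSup_of_le x
        (Q.comp_assoc _ _ _).le)))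
  · exact iSup₂_le fun r y => iSup₂_le fun q x =>
      le_iSup_of_le q (le_iSup_of_le x (le_iSup_of_le r (le_iSup_of_le y
        (Q.comp_assoc _ _ _).ge)))

/-- A (small) `Q`-category. -/
structure QCat (Q : Quantaloid.{u}) : Type (u + 1) where
  el : Q.Obj → Type u
  hom : QRel Q el el
  refl : ∀ p (x : el p), Q.idm p ≤ hom p p x x
  trans : QRel.comp hom hom ≤ hom

/-- Pointwise transitivity in a `Q`-category. -/
theorem QCat.hom_comp_le (X : QCat Q) {p q r : Q.Obj}
    (x : X.el p) (y : X.el q) (z : X.el r) :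
    Q.comp (X.hom q r y z) (X.hom p q x y) ≤ X.hom p r x z :=
  le_trans
    (le_iSup_of_le q (le_iSup (fun y' : X.el q => Q.comp (X.hom q r y' z) (X.hom p q x y')) y))
    (X.trans p r x z)

/-- Any `Q`-relation into a `Q`-category embeds into its post-composite with the hom. -/
theorem QRel.le_hom_comp {W : Q.Obj → Type u} {Z : QCat Q} (ρ : QRel Q W Z.el) :
    ρ ≤ QRel.comp Z.hom ρ := by
  intro p q x z
  calc ρ p q x z = Q.comp (Q.idm q) (ρ p q x z) := (Q.idm_comp _).symm
    _ ≤ Q.comp (Z.hom q q z z) (ρ p q x z) := Quantaloid.comp_le_comp (Z.refl q z) le_rfl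
    _ ≤ _ := le_iSup_of_le q
        (le_iSup (fun z' : Z.el q => Q.comp (Z.hom q q z' z) (ρ p q x z')) z)

/-- Any `Q`-relation out of a `Q`-category embeds into its pre-composite with the hom. -/
theorem QRel.le_comp_hom {X : QCat Q} {W : Q.Obj → Type u} (ρ : QRel Q X.el W) :
    ρ ≤ QRel.comp ρ X.hom := by
  intro p q x z
  calc ρ p q x z = Q.comp (ρ p q x z) (Q.idm p) := (Q.comp_idm _).symm
    _ ≤ Q.comp (ρ p q x z) (X.hom p p x x) := Quantaloid.comp_le_comp le_rfl (X.refl p x)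
    _ ≤ _ := le_iSup_of_le p
        (le_iSup (fun x' : X.el p => Q.comp (ρ p q x' z) (X.hom p p x x')) x)

/-- A `Q`-functor. -/
structure QFun (X Y : QCat Q) : Type u where
  app : ∀ p, X.el p → Y.el p
  mono : ∀ p q (x : X.el p) (x' : X.el q),
    X.hom p q x x' ≤ Y.hom p q (app p x) (app q x')

def QFun.id (X : QCat Q) : QFun X X :=
  ⟨fun _ x => x, fun _ _ _ _ => le_rfl⟩

def QFun.comp {X Y Z : QCat Q} (g : QFun Y Z) (f : QFun X Y) : QFun X Z :=
  ⟨fun p x => g.app p (f.app p x),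
   fun p q x x' => le_trans (f.mono p q x x') (g.mono p q (f.app p x) (f.app q x'))⟩

/-- The (pointwise) order of `Q`-functors. -/
instance {X Y : QCat Q} : Preorder (QFun X Y) where
  le f g := ∀ p (x : X.el p), Q.idm p ≤ Y.hom p p (f.app p x) (g.app p x)
  le_refl f p x := Y.refl p (f.app p x)
  le_trans f g h h1 h2 := by
    intro p x
    calc Q.idm p = Q.comp (Q.idm p) (Q.idm p) := (Q.comp_idm _).symm
      _ ≤ Q.comp (Y.hom p p (g.app p x) (h.app p x)) (Y.hom p p (f.app p x) (g.app p x)) :=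
          Quantaloid.comp_le_comp (h2 p x) (h1 p x)
      _ ≤ Y.hom p p (f.app p x) (h.app p x) := Y.hom_comp_le _ _ _

/-- A `Q`-distributor between `Q`-categories. -/
structure QDist (X Y : QCat Q) : Type u where
  rel : QRel Q X.el Y.el
  compat : QRel.comp Y.hom (QRel.comp rel X.hom) ≤ rel

instance {X Y : QCat Q} : PartialOrder (QDist X Y) where
  le φ ψ := φ.rel ≤ ψ.rel
  le_refl φ := le_refl φ.rel
  le_trans _ _ _ h h' := by
    intro p q x y
    exact le_trans (h p q x y) (h' p q x y)
  le_antisymm φ ψ h h' := by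
    have hr : φ.rel = ψ.rel := le_antisymm h h'
    cases φ; cases ψ; cases hr; rfl

theorem QDist.hom_comp_le {X Y : QCat Q} (φ : QDist X Y) :
    QRel.comp Y.hom φ.rel ≤ φ.rel :=
  le_trans (QRel.comp_mono le_rfl (QRel.le_comp_hom φ.rel)) φ.compat

theorem QDist.comp_hom_le {X Y : QCat Q} (φ : QDist X Y) :
    QRel.comp φ.rel X.hom ≤ φ.rel :=
  le_trans (QRel.le_hom_comp _) φ.compat

theorem QDist.rel_comp_hom {X Y : QCat Q} (φ : QDist X Y) {p q r : Q.Obj}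
    (x : X.el p) (x' : X.el q) (y : Y.el r) :
    Q.comp (φ.rel q r x' y) (X.hom p q x x') ≤ φ.rel p r x y :=
  le_trans
    (le_iSup_of_le q (le_iSup (fun x'' : X.el q => Q.comp (φ.rel q r x'' y) (X.hom p q x x'')) x'))
    (φ.comp_hom_le p r x y)

theorem QDist.hom_comp_rel {X Y : QCat Q} (φ : QDist X Y) {p q r : Q.Obj}
    (x : X.el p) (y : Y.el q) (y' : Y.el r) :
    Q.comp (Y.hom q r y y') (φ.rel p q x y) ≤ φ.rel p r x y' :=
  le_trans
    (le_iSup_of_le q (le_iSup (fun y'' : Y.el q => Q.comp (Y.hom q r y'' y') (φ.rel p q x y'')) y))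
    (φ.hom_comp_le p r x y')

/-- Composition of `Q`-distributors. -/
def QDist.comp {X Y Z : QCat Q} (ψ : QDist Y Z) (φ : QDist X Y) : QDist X Z :=
  ⟨QRel.comp ψ.rel φ.rel, by
    calc QRel.comp Z.hom (QRel.comp (QRel.comp ψ.rel φ.rel) X.hom)
        = QRel.comp (QRel.comp Z.hom ψ.rel) (QRel.comp φ.rel X.hom) := by
          rw [QRel.comp_assoc, QRel.comp_assoc]
      _ ≤ QRel.comp ψ.rel φ.rel :=
          QRel.comp_mono ψ.hom_comp_le φ.comp_hom_le⟩

/-- The identity distributor `1_X^*` on a `Q`-category. -/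
def QCat.homDist (X : QCat Q) : QDist X X :=
  ⟨X.hom, le_trans (QRel.comp_mono le_rfl X.trans) X.trans⟩

/-- The graph `f_*` of a `Q`-functor. -/
def QFun.graph {X Y : QCat Q} (f : QFun X Y) : QDist X Y :=
  ⟨fun p q x y => Y.hom p q (f.app p x) y, by
    intro p q x y
    simp only [QRel.comp, Quantaloid.comp_iSup, Quantaloid.iSup_comp]
    refine iSup₂_le fun q' y' => iSup₂_le fun p' x' => ?_
    calc Q.comp (Y.hom q' q y' y) (Q.comp (Y.hom p' q' (f.app p' x') y') (X.hom p p' x x'))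
        ≤ Q.comp (Y.hom q' q y' y)
            (Q.comp (Y.hom p' q' (f.app p' x') y') (Y.hom p p' (f.app p x) (f.app p' x'))) :=
          Quantaloid.comp_le_comp le_rfl
            (Quantaloid.comp_le_comp le_rfl (f.mono p p' x x'))
      _ ≤ Q.comp (Y.hom q' q y' y) (Y.hom p q' (f.app p x) y') :=
          Quantaloid.comp_le_comp le_rfl (Y.hom_comp_le _ _ _)
      _ ≤ Y.hom p q (f.app p x) y := Y.hom_comp_le _ _ _⟩

/-- The cograph `f^*` of a `Q`-functor. -/
def QFun.cograph {X Y : QCat Q} (f : QFun X Y) : QDist Y X :=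
  ⟨fun p q y x => Y.hom p q y (f.app q x), by
    intro p q y x
    simp only [QRel.comp, Quantaloid.comp_iSup, Quantaloid.iSup_comp]
    refine iSup₂_le fun q' x' => iSup₂_le fun p' y' => ?_
    calc Q.comp (X.hom q' q x' x) (Q.comp (Y.hom p' q' y' (f.app q' x')) (Y.hom p p' y y'))
        ≤ Q.comp (Y.hom q' q (f.app q' x') (f.app q x))
            (Q.comp (Y.hom p' q' y' (f.app q' x')) (Y.hom p p' y y')) :=
          Quantaloid.comp_le_comp (f.mono q' q x' x) le_rfl
      _ ≤ Q.comp (Y.hom q' q (f.app q' x') (f.app q x)) (Y.hom p q' y (f.app q' x')) :=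
          Quantaloid.comp_le_comp le_rfl (Y.hom_comp_le _ _ _)
      _ ≤ Y.hom p q y (f.app q x) := Y.hom_comp_le _ _ _⟩

/-- The presheaf `Q`-category `P X`. -/
def QCat.P (X : QCat Q) : QCat Q where
  el s := { σ : ∀ p, X.el p → Q.Hom p s //
    ∀ p q (x : X.el p) (x' : X.el q), Q.comp (σ q x') (X.hom p q x x') ≤ σ p x }
  hom s s' σ σ' := ⨅ p, ⨅ x : X.el p, Quantaloid.lda (σ'.1 p x) (σ.1 p x)
  refl := by
    intro s σ
    refine le_iInf fun p => le_iInf fun x => Quantaloid.le_lda.mp ?_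
    rw [Q.idm_comp]
  trans := by
    intro s s'' σ σ''
    refine iSup₂_le fun s' σ' => ?_
    refine le_iInf fun p => le_iInf fun x => Quantaloid.le_lda.mp ?_
    rw [Q.comp_assoc]
    have h1 : Q.comp (⨅ p', ⨅ x' : X.el p', Quantaloid.lda (σ'.1 p' x') (σ.1 p' x'))
        (σ.1 p x) ≤ σ'.1 p x :=
      Quantaloid.le_lda.mpr (le_trans (iInf_le _ p) (iInf_le _ x))
    have h2 : Q.comp (⨅ p', ⨅ x' : X.el p', Quantaloid.lda (σ''.1 p' x') (σ'.1 p' x'))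
        (σ'.1 p x) ≤ σ''.1 p x :=
      Quantaloid.le_lda.mpr (le_trans (iInf_le _ p) (iInf_le _ x))
    exact le_trans (Quantaloid.comp_le_comp le_rfl h1) h2

/-- The copresheaf `Q`-category `P† X`. -/
def QCat.Pd (X : QCat Q) : QCat Q where
  el s := { τ : ∀ q, X.el q → Q.Hom s q //
    ∀ p q (x : X.el p) (x' : X.el q), Q.comp (X.hom p q x x') (τ p x) ≤ τ q x' }
  hom s s' τ τ' := ⨅ q, ⨅ x : X.el q, Quantaloid.rda (τ'.1 q x) (τ.1 q x)
  refl := by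
    intro s τ
    refine le_iInf fun q => le_iInf fun x => Quantaloid.le_rda.mp ?_
    rw [Q.comp_idm]
  trans := by
    intro s s'' τ τ''
    refine iSup₂_le fun s' τ' => ?_
    refine le_iInf fun q => le_iInf fun x => Quantaloid.le_rda.mp ?_
    rw [← Q.comp_assoc]
    have h1 : Q.comp (τ''.1 q x)
        (⨅ q', ⨅ x' : X.el q', Quantaloid.rda (τ''.1 q' x') (τ'.1 q' x')) ≤ τ'.1 q x :=
      Quantaloid.le_rda.mpr (le_trans (iInf_le _ q) (iInf_le _ x))
    have h2 : Q.comp (τ'.1 q x)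
        (⨅ q', ⨅ x' : X.el q', Quantaloid.rda (τ'.1 q' x') (τ.1 q' x')) ≤ τ.1 q x :=
      Quantaloid.le_rda.mpr (le_trans (iInf_le _ q) (iInf_le _ x))
    exact le_trans (Quantaloid.comp_le_comp h1 le_rfl) h2

/-- The Yoneda embedding `y_X : X → P X`. -/
def QCat.y (X : QCat Q) : QFun X X.P where
  app p x := ⟨fun q x' => X.hom q p x' x,
    fun p' q' x1 x2 => X.hom_comp_le x1 x2 x⟩
  mono := by
    intro p q x x'
    refine le_iInf fun r => le_iInf fun x'' => Quantaloid.le_lda.mp ?_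
    exact X.hom_comp_le x'' x x'

/-- The co-Yoneda embedding `y†_X : X → P† X`. -/
def QCat.yd (X : QCat Q) : QFun X X.Pd where
  app p x := ⟨fun q x' => X.hom p q x x',
    fun p' q' x1 x2 => X.hom_comp_le x x1 x2⟩
  mono := by
    intro p q x x'
    refine le_iInf fun r => le_iInf fun x'' => Quantaloid.le_rda.mp ?_
    exact X.hom_comp_le x x' x''

/-- `φ^→ : P Y → P X`, `τ ↦ τ ∘ φ`. -/
def QDist.fwd {X Y : QCat Q} (φ : QDist X Y) : QFun Y.P X.P where
  app s τ := ⟨fun p x => ⨆ q, ⨆ y : Y.el q, Q.comp (τ.1 q y) (φ.rel p q x y), by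
    intro p q x x'
    rw [Quantaloid.iSup_comp]
    refine iSup_le fun r => ?_
    rw [Quantaloid.iSup_comp]
    refine iSup_le fun y => ?_
    rw [Q.comp_assoc]
    exact le_iSup_of_le r (le_iSup_of_le y
      (Quantaloid.comp_le_comp le_rfl (φ.rel_comp_hom x x' y)))⟩
  mono := by
    intro s s' τ τ'
    refine le_iInf fun p => le_iInf fun x => Quantaloid.le_lda.mp ?_
    rw [Quantaloid.comp_iSup]
    refine iSup_le fun r => ?_
    rw [Quantaloid.comp_iSup]
    refine iSup_le fun y => ?_
    rw [← Q.comp_assoc]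
    have h : Q.comp (Y.P.hom s s' τ τ') (τ.1 r y) ≤ τ'.1 r y :=
      Quantaloid.le_lda.mpr (le_trans (iInf_le _ r) (iInf_le _ y))
    exact le_iSup_of_le r (le_iSup_of_le y (Quantaloid.comp_le_comp h le_rfl))

/-- `φ^↞ : P† X → P† Y`, `σ ↦ φ ∘ σ`. -/
def QDist.bwd {X Y : QCat Q} (φ : QDist X Y) : QFun X.Pd Y.Pd where
  app s σ := ⟨fun q y => ⨆ p, ⨆ x : X.el p, Q.comp (φ.rel p q x y) (σ.1 p x), by
    intro p q y y'
    rw [Quantaloid.comp_iSup]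
    refine iSup_le fun r => ?_
    rw [Quantaloid.comp_iSup]
    refine iSup_le fun x => ?_
    rw [← Q.comp_assoc]
    exact le_iSup_of_le r (le_iSup_of_le x
      (Quantaloid.comp_le_comp (φ.hom_comp_rel x y y') le_rfl))⟩
  mono := by
    intro s s' σ σ'
    refine le_iInf fun q => le_iInf fun y => Quantaloid.le_rda.mp ?_
    rw [Quantaloid.iSup_comp]
    refine iSup_le fun r => ?_
    rw [Quantaloid.iSup_comp]
    refine iSup_le fun x => ?_
    rw [Q.comp_assoc]
    have h : Q.comp (σ'.1 r x) (X.Pd.hom s s' σ σ') ≤ σ.1 r x :=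
      Quantaloid.le_rda.mpr (le_trans (iInf_le _ r) (iInf_le _ x))
    exact le_iSup_of_le r (le_iSup_of_le x (Quantaloid.comp_le_comp le_rfl h))

/-- `φ_→ : P X → P Y`, `σ ↦ σ ↙ φ`. -/
def QDist.fwdr {X Y : QCat Q} (φ : QDist X Y) : QFun X.P Y.P where
  app s σ := ⟨fun q y => ⨅ p, ⨅ x : X.el p, Quantaloid.lda (σ.1 p x) (φ.rel p q x y), by
    intro q q' y y'
    refine le_iInf fun p => le_iInf fun x => Quantaloid.le_lda.mp ?_
    rw [Q.comp_assoc]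
    have h1 : Q.comp (Y.hom q q' y y') (φ.rel p q x y) ≤ φ.rel p q' x y' :=
      φ.hom_comp_rel x y y'
    have h2 : Q.comp ((⨅ p', ⨅ x' : X.el p',
        Quantaloid.lda (σ.1 p' x') (φ.rel p' q' x' y')) : Q.Hom q' s) (φ.rel p q' x y')
        ≤ σ.1 p x :=
      Quantaloid.le_lda.mpr (le_trans (iInf_le _ p) (iInf_le _ x))
    exact le_trans (Quantaloid.comp_le_comp le_rfl h1) h2⟩
  mono := by
    intro s s' σ σ'
    refine le_iInf fun q => le_iInf fun y => Quantaloid.le_lda.mp ?_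
    refine le_iInf fun p => le_iInf fun x => Quantaloid.le_lda.mp ?_
    rw [Q.comp_assoc]
    have h1 : Q.comp ((⨅ p', ⨅ x' : X.el p',
        Quantaloid.lda (σ.1 p' x') (φ.rel p' q x' y)) : Q.Hom q s) (φ.rel p q x y)
        ≤ σ.1 p x :=
      Quantaloid.le_lda.mpr (le_trans (iInf_le _ p) (iInf_le _ x))
    have h2 : Q.comp (X.P.hom s s' σ σ') (σ.1 p x) ≤ σ'.1 p x :=
      Quantaloid.le_lda.mpr (le_trans (iInf_le _ p) (iInf_le _ x))
    exact le_trans (Quantaloid.comp_le_comp le_rfl h1) h2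

/-- Isbell `φ↑ : P X → P† Y`, `σ ↦ φ ↙ σ`. -/
def QDist.up {X Y : QCat Q} (φ : QDist X Y) : QFun X.P Y.Pd where
  app s σ := ⟨fun q y => ⨅ p, ⨅ x : X.el p, Quantaloid.lda (φ.rel p q x y) (σ.1 p x), by
    intro q q' y y'
    refine le_iInf fun p => le_iInf fun x => Quantaloid.le_lda.mp ?_
    rw [Q.comp_assoc]
    have h1 : Q.comp ((⨅ p', ⨅ x' : X.el p',
        Quantaloid.lda (φ.rel p' q x' y) (σ.1 p' x')) : Q.Hom s q) (σ.1 p x)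
        ≤ φ.rel p q x y :=
      Quantaloid.le_lda.mpr (le_trans (iInf_le _ p) (iInf_le _ x))
    exact le_trans (Quantaloid.comp_le_comp le_rfl h1) (φ.hom_comp_rel x y y')⟩
  mono := by
    intro s s' σ σ'
    refine le_iInf fun q => le_iInf fun y => Quantaloid.le_rda.mp ?_
    refine le_iInf fun p => le_iInf fun x => Quantaloid.le_lda.mp ?_
    rw [Q.comp_assoc]
    have h1 : Q.comp (X.P.hom s s' σ σ') (σ.1 p x) ≤ σ'.1 p x :=
      Quantaloid.le_lda.mpr (le_trans (iInf_le _ p) (iInf_le _ x))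
    have h2 : Q.comp ((⨅ p', ⨅ x' : X.el p',
        Quantaloid.lda (φ.rel p' q x' y) (σ'.1 p' x')) : Q.Hom s' q) (σ'.1 p x)
        ≤ φ.rel p q x y :=
      Quantaloid.le_lda.mpr (le_trans (iInf_le _ p) (iInf_le _ x))
    exact le_trans (Quantaloid.comp_le_comp le_rfl h1) h2

/-- Isbell `φ↓ : P† Y → P X`, `τ ↦ τ ↘ φ`. -/
def QDist.down {X Y : QCat Q} (φ : QDist X Y) : QFun Y.Pd X.P where
  app s τ := ⟨fun p x => ⨅ q, ⨅ y : Y.el q, Quantaloid.rda (τ.1 q y) (φ.rel p q x y), by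
    intro p p' x x'
    refine le_iInf fun q => le_iInf fun y => Quantaloid.le_rda.mp ?_
    rw [← Q.comp_assoc]
    have h1 : Q.comp (τ.1 q y) ((⨅ q', ⨅ y' : Y.el q',
        Quantaloid.rda (τ.1 q' y') (φ.rel p' q' x' y')) : Q.Hom p' s)
        ≤ φ.rel p' q x' y :=
      Quantaloid.le_rda.mpr (le_trans (iInf_le _ q) (iInf_le _ y))
    exact le_trans (Quantaloid.comp_le_comp h1 le_rfl) (φ.rel_comp_hom x x' y)⟩
  mono := by
    intro s s' τ τ'
    refine le_iInf fun p => le_iInf fun x => Quantaloid.le_lda.mp ?_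
    refine le_iInf fun q => le_iInf fun y => Quantaloid.le_rda.mp ?_
    rw [← Q.comp_assoc]
    have h1 : Q.comp (τ'.1 q y) (Y.Pd.hom s s' τ τ') ≤ τ.1 q y :=
      Quantaloid.le_rda.mpr (le_trans (iInf_le _ q) (iInf_le _ y))
    have h2 : Q.comp (τ.1 q y) ((⨅ q', ⨅ y' : Y.el q',
        Quantaloid.rda (τ.1 q' y') (φ.rel p q' x y')) : Q.Hom p s)
        ≤ φ.rel p q x y :=
      Quantaloid.le_rda.mpr (le_trans (iInf_le _ q) (iInf_le _ y))
    exact le_trans (Quantaloid.comp_le_comp h1 le_rfl) h2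

/-- The transpose `←φ : Y → P X` of a distributor `φ : X ⇸ Y`. -/
def QDist.transpose {X Y : QCat Q} (φ : QDist X Y) : QFun Y X.P where
  app q y := ⟨fun p x => φ.rel p q x y,
    fun p q' x x' => φ.rel_comp_hom x x' y⟩
  mono := by
    intro q q' y y'
    refine le_iInf fun p => le_iInf fun x => Quantaloid.le_lda.mp ?_
    exact φ.hom_comp_rel x y y'

/-- The inverse of transposition. -/
def QFun.untranspose {X Y : QCat Q} (g : QFun Y X.P) : QDist X Y :=
  ⟨fun p q x y => (g.app q y).1 p x, by
    intro p q x y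
    simp only [QRel.comp, Quantaloid.comp_iSup, Quantaloid.iSup_comp]
    refine iSup₂_le fun q' y' => iSup₂_le fun p' x' => ?_
    have h1 : Q.comp ((g.app q' y').1 p' x') (X.hom p p' x x') ≤ (g.app q' y').1 p x :=
      (g.app q' y').2 p p' x x'
    have h2 : Q.comp (Y.hom q' q y' y) ((g.app q' y').1 p x) ≤ (g.app q y).1 p x :=
      Quantaloid.le_lda.mpr
        (le_trans (g.mono q' q y' y) (le_trans (iInf_le _ p) (iInf_le _ x)))
    exact le_trans (Quantaloid.comp_le_comp le_rfl h1) h2⟩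

/-- `f_! := (f^*)^→ : P X → P Y`. -/
def pshf {X Y : QCat Q} (f : QFun X Y) : QFun X.P Y.P := f.cograph.fwd

/-- `f^! := (f_*)^→ : P Y → P X`. -/
def pshb {X Y : QCat Q} (f : QFun X Y) : QFun Y.P X.P := f.graph.fwd

/-- `f_† := (f_*)^↞ : P† X → P† Y`. -/
def cpsf {X Y : QCat Q} (f : QFun X Y) : QFun X.Pd Y.Pd := f.graph.bwd

/-- `f^† := (f^*)^↞ : P† Y → P† X`. -/
def cpsb {X Y : QCat Q} (f : QFun X Y) : QFun Y.Pd X.Pd := f.cograph.bwd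

/-- `sup_{P X} = y_X^! : P P X → P X`: the multiplication of the presheaf 2-monad. -/
def supP (X : QCat Q) : QFun X.P.P X.P := pshb X.y

/-- `inf_{P† X} = (y†_X)^† : P† P† X → P† X`: the multiplication of the copresheaf
2-monad. -/
def infPd (X : QCat Q) : QFun X.Pd.Pd X.Pd := cpsb X.yd

/-- Adjunction `f ⊣ g` in `Q`-Cat. -/
def QAdj {X Y : QCat Q} (f : QFun X Y) (g : QFun Y X) : Prop :=
  QFun.id X ≤ g.comp f ∧ f.comp g ≤ QFun.id Y

/-- Fully faithful `Q`-functors. -/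
def QFun.FullyFaithful {X Y : QCat Q} (f : QFun X Y) : Prop :=
  ∀ p q (x : X.el p) (x' : X.el q), X.hom p q x x' = Y.hom p q (f.app p x) (f.app q x')

/-- A `Q`-closure operation on a `Q`-category. -/
def IsClosureOp (Z : QCat Q) (c : QFun Z Z) : Prop :=
  QFun.id Z ≤ c ∧ c.comp c = c

/-- A 2-functor on `Q`-Cat. -/
structure TwoFunctor (Q : Quantaloid.{u}) : Type (u + 1) where
  obj : QCat Q → QCat Q
  map : ∀ {X Y : QCat Q}, QFun X Y → QFun (obj X) (obj Y)
  map_id : ∀ X : QCat Q, map (QFun.id X) = QFun.id (obj X)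
  map_comp : ∀ {X Y Z : QCat Q} (g : QFun Y Z) (f : QFun X Y),
    map (g.comp f) = (map g).comp (map f)
  map_mono : ∀ {X Y : QCat Q} {f g : QFun X Y}, f ≤ g → map f ≤ map g

/-- A 2-monad on `Q`-Cat. -/
structure TwoMonad (Q : Quantaloid.{u}) extends TwoFunctor Q where
  unit : ∀ X : QCat Q, QFun X (obj X)
  mult : ∀ X : QCat Q, QFun (obj (obj X)) (obj X)
  unit_nat : ∀ {X Y : QCat Q} (f : QFun X Y), (unit Y).comp f = (map f).comp (unit X)
  mult_nat : ∀ {X Y : QCat Q} (f : QFun X Y),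
    (mult Y).comp (map (map f)) = (map f).comp (mult X)
  mult_unit : ∀ X : QCat Q, (mult X).comp (unit (obj X)) = QFun.id (obj X)
  mult_map_unit : ∀ X : QCat Q, (mult X).comp (map (unit X)) = QFun.id (obj X)
  mult_assoc : ∀ X : QCat Q, (mult X).comp (map (mult X)) = (mult X).comp (mult (obj X))

/-- The type of families `λ_X : T P X → P T X`. -/
abbrev LamFamily (T : TwoFunctor Q) : Type (u + 1) :=
  ∀ X : QCat Q, QFun (T.obj X.P) ((T.obj X).P)

/-- Lax naturality law (a): `(Tf)_! ∘ λ_X ≤ λ_Y ∘ T(f_!)`. -/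
def LawA (T : TwoFunctor Q) (lam : LamFamily T) : Prop :=
  ∀ (X Y : QCat Q) (f : QFun X Y),
    (pshf (T.map f)).comp (lam X) ≤ (lam Y).comp (T.map (pshf f))

/-- Lax `P`-unit law (b): `y_{TX} ≤ λ_X ∘ T y_X`. -/
def LawB (T : TwoFunctor Q) (lam : LamFamily T) : Prop :=
  ∀ X : QCat Q, QCat.y (T.obj X) ≤ (lam X).comp (T.map X.y)

/-- The `P`-unit law (b) holding strictly (flatness). -/
def LawBstrict (T : TwoFunctor Q) (lam : LamFamily T) : Prop :=
  ∀ X : QCat Q, (lam X).comp (T.map X.y) = QCat.y (T.obj X)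

/-- Lax `P`-multiplication law (c): `s_{TX} ∘ (λ_X)_! ∘ λ_{PX} ≤ λ_X ∘ T s_X`. -/
def LawC (T : TwoFunctor Q) (lam : LamFamily T) : Prop :=
  ∀ X : QCat Q,
    (supP (T.obj X)).comp ((pshf (lam X)).comp (lam X.P)) ≤ (lam X).comp (T.map (supP X))

/-- Lax `T`-unit law (d): `(e_X)_! ≤ λ_X ∘ e_{PX}`. -/
def LawD (M : TwoMonad Q) (lam : LamFamily M.toTwoFunctor) : Prop :=
  ∀ X : QCat Q, pshf (M.unit X) ≤ (lam X).comp (M.unit X.P)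

/-- Lax `T`-multiplication law (e): `(m_X)_! ∘ λ_{TX} ∘ T λ_X ≤ λ_X ∘ m_{PX}`. -/
def LawE (M : TwoMonad Q) (lam : LamFamily M.toTwoFunctor) : Prop :=
  ∀ X : QCat Q,
    (pshf (M.mult X)).comp ((lam (M.obj X)).comp (M.map (lam X))) ≤ (lam X).comp (M.mult X.P)

def IsDistLawABC (T : TwoFunctor Q) (lam : LamFamily T) : Prop :=
  LawA T lam ∧ LawB T lam ∧ LawC T lam

/-- A (lax) distributive law of the 2-monad `M` over the presheaf 2-monad. -/
def IsDistLaw (M : TwoMonad Q) (lam : LamFamily M.toTwoFunctor) : Prop :=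
  IsDistLawABC M.toTwoFunctor lam ∧ LawD M lam ∧ LawE M lam

/-- A flat distributive law: (b) holds strictly. -/
def IsFlatDistLaw (M : TwoMonad Q) (lam : LamFamily M.toTwoFunctor) : Prop :=
  IsDistLaw M lam ∧ LawBstrict M.toTwoFunctor lam

/-- Lax `λ`-algebra: laws (f) and (g). -/
def IsLaxAlg (M : TwoMonad Q) (lam : LamFamily M.toTwoFunctor) (X : QCat Q)
    (p : QFun (M.obj X) X.P) : Prop :=
  X.y ≤ p.comp (M.unit X) ∧
  (supP X).comp ((pshf p).comp ((lam X).comp (M.map p))) ≤ p.comp (M.mult X)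

/-- Lax `λ`-homomorphism: law (h). -/
def IsLaxHom (M : TwoMonad Q) {X Y : QCat Q}
    (p : QFun (M.obj X) X.P) (q : QFun (M.obj Y) Y.P) (f : QFun X Y) : Prop :=
  (pshf f).comp p ≤ q.comp (M.map f)

/-- The type of families `T̂φ : TX ⇸ TY`, one for each `φ : X ⇸ Y`. -/
abbrev ExtFamily (T : TwoFunctor Q) : Type (u + 1) :=
  ∀ ⦃X Y : QCat Q⦄, QDist X Y → QDist (T.obj X) (T.obj Y)

/-- A lax extension of the 2-functor `T` to `Q`-Dist: conditions (1), (2), (3). -/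
def IsLaxExt (T : TwoFunctor Q) (ext : ExtFamily T) : Prop :=
  (∀ (X Y : QCat Q) (φ φ' : QDist X Y), φ ≤ φ' → ext φ ≤ ext φ') ∧
  (∀ (X Y Z : QCat Q) (φ : QDist X Y) (ψ : QDist Y Z), (ext ψ).comp (ext φ) ≤ ext (ψ.comp φ)) ∧
  (∀ (X Y : QCat Q) (f : QFun X Y),
    (T.map f).graph ≤ ext f.graph ∧ (T.map f).cograph ≤ ext f.cograph)

/-- Condition (4): `φ ∘ e_X^* ≤ e_Y^* ∘ T̂φ`. -/
def ExtLaw4 (M : TwoMonad Q) (ext : ExtFamily M.toTwoFunctor) : Prop :=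
  ∀ (X Y : QCat Q) (φ : QDist X Y),
    φ.comp (M.unit X).cograph ≤ ((M.unit Y).cograph).comp (ext φ)

/-- Condition (5): `T̂T̂φ ∘ m_X^* ≤ m_Y^* ∘ T̂φ`. -/
def ExtLaw5 (M : TwoMonad Q) (ext : ExtFamily M.toTwoFunctor) : Prop :=
  ∀ (X Y : QCat Q) (φ : QDist X Y),
    (ext (ext φ)).comp (M.mult X).cograph ≤ ((M.mult Y).cograph).comp (ext φ)

/-- A lax extension of the 2-monad `M` to `Q`-Dist. -/
def IsMonadLaxExt (M : TwoMonad Q) (ext : ExtFamily M.toTwoFunctor) : Prop :=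
  IsLaxExt M.toTwoFunctor ext ∧ ExtLaw4 M ext ∧ ExtLaw5 M ext

/-- Flatness of a lax extension: `T̂ 1_X^* = 1_{TX}^*`. -/
def FlatExt (T : TwoFunctor Q) (ext : ExtFamily T) : Prop :=
  ∀ X : QCat Q, ext X.homDist = (T.obj X).homDist

/-- From a lax distributive law to a lax extension: `←(T̂φ) = λ_X ∘ T(←φ)`. -/
def PhiExt (T : TwoFunctor Q) (lam : LamFamily T) : ExtFamily T :=
  fun X Y φ => QFun.untranspose ((lam X).comp (T.map φ.transpose))

/-- From a lax extension to a lax distributive law: `λ_X = ←(T̂((y_X)_*))`. -/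
def PsiLam (T : TwoFunctor Q) (ext : ExtFamily T) : LamFamily T :=
  fun X => (ext X.y.graph).transpose

/-- The canonical lax extension `T̂φ = (T ←φ)^* ∘ (T y_X)_*`. -/
def hatExt (T : TwoFunctor Q) : ExtFamily T :=
  fun X Y φ => ((T.map φ.transpose).cograph).comp (T.map X.y).graph

/-- `λ_X = y_{PX} ∘ sup_{PX}`: the flat distributive law of `P` over itself. -/
def lamP (X : QCat Q) : QFun X.P.P X.P.P := (QCat.y X.P).comp (supP X)

/-- `λ†_X = ((y_X)_†)^! ∘ y_{P†PX}`: the strict distributive law of `P†` over `P`. -/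
def lamd (X : QCat Q) : QFun X.P.Pd X.Pd.P := (pshb (cpsf X.y)).comp (QCat.y X.P.Pd)

/-- `Λ_X = y_{PP†X} ∘ ((y_X)_†)^!`: the flat distributive law of `P P†` over `P`. -/
def LamPPd (X : QCat Q) : QFun X.P.Pd.P X.Pd.P.P := (QCat.y X.Pd.P).comp (pshb (cpsf X.y))

/-- The multiplication `S_X = s_{P†X} ∘ (y†_{PP†X})^!` of the double presheaf 2-monad. -/
def Smult (X : QCat Q) : QFun X.Pd.P.Pd.P X.Pd.P := (supP X.Pd).comp (pshb (QCat.yd X.Pd.P))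

/-- `Λ†_X = (y_X^!)^{†!} ∘ y_{P†PPX}`: the flat distributive law of `P† P` over `P`. -/
def LamPdP (X : QCat Q) : QFun X.P.P.Pd X.P.Pd.P :=
  (pshf (cpsf (supP X))).comp (QCat.y X.P.P.Pd)

/-- The multiplication `S†_X = s†_{PX} ∘ (y_{P†PX})^†` of the double copresheaf
2-monad. -/
def Sdmult (X : QCat Q) : QFun X.P.Pd.P.Pd X.P.Pd := (infPd X.P).comp (cpsb (QCat.y X.P.Pd))

/-- Pointwise infimum of a family of `Q`-functors into a presheaf `Q`-category. -/
def QFun.iInfP {ι : Type u} {Z X : QCat Q} (F : ι → QFun Z X.P) : QFun Z X.P where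
  app s z := ⟨fun p x => ⨅ i, ((F i).app s z).1 p x, by
    intro p q x x'
    refine le_iInf fun i => ?_
    exact le_trans
      (Quantaloid.comp_le_comp (iInf_le (fun i => ((F i).app s z).1 q x') i) le_rfl)
      (((F i).app s z).2 p q x x')⟩
  mono := by
    intro s s' z z'
    refine le_iInf fun p => le_iInf fun x => Quantaloid.le_lda.mp ?_
    refine le_iInf fun i => ?_
    have h1 : Q.comp (Z.hom s s' z z') (⨅ j, ((F j).app s z).1 p x)
        ≤ Q.comp (Z.hom s s' z z') (((F i).app s z).1 p x) :=
      Quantaloid.comp_le_comp le_rfl (iInf_le _ i)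
    have h2 : Q.comp (Z.hom s s' z z') (((F i).app s z).1 p x)
        ≤ ((F i).app s' z').1 p x :=
      Quantaloid.le_lda.mpr
        (le_trans ((F i).mono s s' z z') (le_trans (iInf_le _ p) (iInf_le _ x)))
    exact le_trans h1 h2

section Helpers

open Quantaloid

theorem lda_le_self' {a c : Q.Obj} (w : Q.Hom a c) (u : Q.Hom a a) (h : Q.idm a ≤ u) :
    Quantaloid.lda w u ≤ w := by
  have h1 : Q.comp (Quantaloid.lda w u) u ≤ w := Quantaloid.le_lda.mpr le_rfl
  calc Quantaloid.lda w u = Q.comp (Quantaloid.lda w u) (Q.idm a) := (Q.comp_idm _).symm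
    _ ≤ Q.comp (Quantaloid.lda w u) u := comp_le_comp le_rfl h
    _ ≤ w := h1

theorem rda_le_self' {a b : Q.Obj} (v : Q.Hom b b) (w : Q.Hom a b) (h : Q.idm b ≤ v) :
    Quantaloid.rda v w ≤ w := by
  have h1 : Q.comp v (Quantaloid.rda v w) ≤ w := Quantaloid.le_rda.mpr le_rfl
  calc Quantaloid.rda v w = Q.comp (Q.idm b) (Quantaloid.rda v w) := (Q.idm_comp _).symm
    _ ≤ Q.comp v (Quantaloid.rda v w) := comp_le_comp h le_rfl
    _ ≤ w := h1

theorem idm_le_lda' {a s : Q.Obj} {w u : Q.Hom a s} :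
    Q.idm s ≤ Quantaloid.lda w u ↔ u ≤ w := by
  rw [← Quantaloid.le_lda, Q.idm_comp]

theorem leP_iff {Z X : QCat Q} (f g : QFun Z X.P) :
    f ≤ g ↔ ∀ s (z : Z.el s) a (x : X.el a), ((f.app s z).1 a x) ≤ ((g.app s z).1 a x) := by
  constructor
  · intro h s z a x
    have h2 : Q.idm s ≤ Quantaloid.lda ((g.app s z).1 a x) ((f.app s z).1 a x) :=
      le_trans (h s z) (le_trans (iInf_le _ a) (iInf_le _ x))
    exact idm_le_lda'.mp h2
  · intro h s z
    exact le_iInf fun a => le_iInf fun x => idm_le_lda'.mpr (h s z a x)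

theorem down_spec {X Y : QCat Q} (φ : QDist X Y) {s} (τ : Y.Pd.el s) {a} (x : X.el a)
    (u : Q.Hom a s) :
    u ≤ ((φ.down).app s τ).1 a x ↔ ∀ b (y : Y.el b), Q.comp (τ.1 b y) u ≤ φ.rel a b x y := by
  constructor
  · intro h b y
    exact Quantaloid.le_rda.mpr (le_trans h (le_trans (iInf_le _ b) (iInf_le _ y)))
  · intro h
    exact le_iInf fun b => le_iInf fun y => Quantaloid.le_rda.mp (h b y)

theorem down_comp_le {X Y : QCat Q} (φ : QDist X Y) {s} (τ : Y.Pd.el s) {a} (x : X.el a)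
    {b} (y : Y.el b) :
    Q.comp (τ.1 b y) (((φ.down).app s τ).1 a x) ≤ φ.rel a b x y :=
  (down_spec φ τ x _).mp le_rfl b y

theorem down_yd {X : QCat Q} (φ : QDist X X) {a b} (x : X.el a) (x' : X.el b) :
    ((φ.down).app b ((X.yd).app b x')).1 a x = φ.rel a b x x' := by
  apply le_antisymm
  · calc ((φ.down).app b ((X.yd).app b x')).1 a x
        = Q.comp (Q.idm b) (((φ.down).app b ((X.yd).app b x')).1 a x) := (Q.idm_comp _).symm
      _ ≤ Q.comp (X.hom b b x' x') (((φ.down).app b ((X.yd).app b x')).1 a x) :=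
          comp_le_comp (X.refl b x') le_rfl
      _ ≤ φ.rel a b x x' := down_comp_le φ ((X.yd).app b x') x x'
  · exact (down_spec φ _ x _).mpr fun c z => φ.hom_comp_rel x x' z

theorem P_hom_ev {X : QCat Q} {s t} (σ : X.P.el s) (σ' : X.P.el t) {a} (x : X.el a) :
    Q.comp (X.P.hom s t σ σ') (σ.1 a x) ≤ σ'.1 a x :=
  Quantaloid.le_lda.mpr (le_trans (iInf_le _ a) (iInf_le _ x))

theorem Pd_hom_ev {X : QCat Q} {s t} (τ : X.Pd.el s) (τ' : X.Pd.el t) {b} (y : X.el b) :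
    Q.comp (τ'.1 b y) (X.Pd.hom s t τ τ') ≤ τ.1 b y :=
  Quantaloid.le_rda.mpr (le_trans (iInf_le _ b) (iInf_le _ y))

theorem P_hom_y (X : QCat Q) {a t} (x : X.el a) (σ : X.P.el t) :
    X.P.hom a t ((X.y).app a x) σ = σ.1 a x := by
  apply le_antisymm
  · exact le_trans (le_trans (iInf_le _ a) (iInf_le _ x)) (lda_le_self' _ _ (X.refl a x))
  · exact le_iInf fun c => le_iInf fun z => Quantaloid.le_lda.mp (σ.2 c a z x)

theorem Pd_hom_yd (X : QCat Q) {s b} (τ : X.Pd.el s) (x : X.el b) :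
    X.Pd.hom s b τ ((X.yd).app b x) = τ.1 b x := by
  apply le_antisymm
  · exact le_trans (le_trans (iInf_le _ b) (iInf_le _ x)) (rda_le_self' _ _ (X.refl b x))
  · exact le_iInf fun c => le_iInf fun z => Quantaloid.le_rda.mp (τ.2 b c x z)

theorem sup_hom_comp_hom (Z : QCat Q) {a b} (u : Z.el a) (w : Z.el b) :
    (⨆ c, ⨆ v : Z.el c, Q.comp (Z.hom c b v w) (Z.hom a c u v)) = Z.hom a b u w := by
  apply le_antisymm
  · exact iSup₂_le fun c v => Z.hom_comp_le u v w
  · refine le_iSup_of_le a (le_iSup_of_le u ?_)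
    calc Z.hom a b u w = Q.comp (Z.hom a b u w) (Q.idm a) := (Q.comp_idm _).symm
      _ ≤ _ := comp_le_comp le_rfl (Z.refl a u)

theorem lamd_app (X : QCat Q) {s} (Θ : X.P.Pd.el s) {b} (τ₀ : X.Pd.el b) :
    (((lamd X).app s Θ).1 b τ₀) = X.P.Pd.hom b s ((cpsf X.y).app b τ₀) Θ :=
  sup_hom_comp_hom X.P.Pd _ _

theorem cY_val (X : QCat Q) {b} (τ₀ : X.Pd.el b) {t} (σ : X.P.el t) :
    ((cpsf X.y).app b τ₀).1 t σ = ⨆ c, ⨆ z : X.el c, Q.comp (σ.1 c z) (τ₀.1 c z) := by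
  show (⨆ c, ⨆ z : X.el c, Q.comp (X.P.hom c t ((X.y).app c z) σ) (τ₀.1 c z)) = _
  exact iSup_congr fun c => iSup_congr fun z => by rw [P_hom_y]

theorem infPd_val (X : QCat Q) {s} (T : X.Pd.Pd.el s) {b} (z : X.el b) :
    ((infPd X).app s T).1 b z = ⨆ t, ⨆ τ' : X.Pd.el t, Q.comp (τ'.1 b z) (T.1 t τ') := by
  show (⨆ t, ⨆ τ' : X.Pd.el t, Q.comp (X.Pd.hom t b τ' ((X.yd).app b z)) (T.1 t τ')) = _
  exact iSup_congr fun t => iSup_congr fun τ' => by rw [Pd_hom_yd]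

theorem cpsf_p_val {X : QCat Q} (p : QFun X.Pd X.P) {s} (T : X.Pd.Pd.el s) {t} (σ : X.P.el t) :
    ((cpsf p).app s T).1 t σ
      = ⨆ t', ⨆ τ' : X.Pd.el t', Q.comp (X.P.hom t' t (p.app t' τ') σ) (T.1 t' τ') := rfl

theorem cpsf_yd_val (X : QCat Q) {s} (τ : X.Pd.el s) {t} (τ' : X.Pd.el t) :
    ((cpsf X.yd).app s τ).1 t τ'
      = ⨆ c, ⨆ w : X.el c, Q.comp (X.Pd.hom c t ((X.yd).app c w) τ') (τ.1 c w) := rfl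

theorem QFun_ext {X Y : QCat Q} {f g : QFun X Y} (h : f.app = g.app) : f = g := by
  cases f; cases g; cases h; rfl

theorem infPd_cpsf_yd (X : QCat Q) {s} (τ : X.Pd.el s) :
    (infPd X).app s ((cpsf X.yd).app s τ) = τ := by
  refine Subtype.ext (funext fun b => funext fun z => le_antisymm ?_ ?_)
  · rw [infPd_val]
    refine iSup₂_le fun t τ' => ?_
    rw [cpsf_yd_val, Quantaloid.comp_iSup]
    refine iSup_le fun c => ?_
    rw [Quantaloid.comp_iSup]
    refine iSup_le fun w => ?_
    rw [← Q.comp_assoc]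
    have h1 : Q.comp (τ'.1 b z) (X.Pd.hom c t ((X.yd).app c w) τ')
        ≤ ((X.yd).app c w).1 b z := Pd_hom_ev _ _ _
    calc Q.comp (Q.comp (τ'.1 b z) (X.Pd.hom c t ((X.yd).app c w) τ')) (τ.1 c w)
        ≤ Q.comp (X.hom c b w z) (τ.1 c w) := comp_le_comp h1 le_rfl
      _ ≤ τ.1 b z := τ.2 c b w z
  · rw [infPd_val]
    refine le_iSup_of_le b (le_iSup_of_le ((X.yd).app b z) ?_)
    have h2 : τ.1 b z ≤ ((cpsf X.yd).app s τ).1 b ((X.yd).app b z) := by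
      rw [cpsf_yd_val]
      refine le_iSup_of_le b (le_iSup_of_le z ?_)
      calc τ.1 b z = Q.comp (Q.idm b) (τ.1 b z) := (Q.idm_comp _).symm
        _ ≤ _ := comp_le_comp (X.Pd.refl b ((X.yd).app b z)) le_rfl
    calc τ.1 b z = Q.comp (Q.idm b) (τ.1 b z) := (Q.idm_comp _).symm
      _ ≤ Q.comp (((X.yd).app b z).1 b z)
          (((cpsf X.yd).app s τ).1 b ((X.yd).app b z)) :=
          comp_le_comp (X.refl b z) h2

theorem F_le {X : QCat Q} (p : QFun X.Pd X.P) {s} (T : X.Pd.Pd.el s) {a} (x : X.el a) :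
    ((((supP X).comp ((pshf p).comp ((lamd X).comp (cpsf p)))).app s T).1 a x)
      ≤ ⨆ b, ⨆ τ₀ : X.Pd.el b,
          Q.comp (X.P.Pd.hom b s ((cpsf X.y).app b τ₀) ((cpsf p).app s T))
            ((p.app b τ₀).1 a x) := by
  show (⨆ t', ⨆ σ' : X.P.el t',
      Q.comp (⨆ b, ⨆ τ₀ : X.Pd.el b,
          Q.comp ((((lamd X).app s ((cpsf p).app s T))).1 b τ₀)
            (X.P.hom t' b σ' (p.app b τ₀)))
        (X.P.hom a t' ((X.y).app a x) σ')) ≤ _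
  refine iSup₂_le fun t' σ' => ?_
  rw [Quantaloid.iSup_comp]
  refine iSup_le fun b => ?_
  rw [Quantaloid.iSup_comp]
  refine iSup_le fun τ₀ => ?_
  rw [Q.comp_assoc, P_hom_y, lamd_app]
  exact le_iSup_of_le b (le_iSup_of_le τ₀ (comp_le_comp le_rfl (P_hom_ev _ _ x)))

theorem F_ge {X : QCat Q} (p : QFun X.Pd X.P) {s} (T : X.Pd.Pd.el s) {a} (x : X.el a)
    {b} (τ₀ : X.Pd.el b) :
    Q.comp (X.P.Pd.hom b s ((cpsf X.y).app b τ₀) ((cpsf p).app s T)) ((p.app b τ₀).1 a x)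
      ≤ ((((supP X).comp ((pshf p).comp ((lamd X).comp (cpsf p)))).app s T).1 a x) := by
  show _ ≤ (⨆ t', ⨆ σ' : X.P.el t',
      Q.comp (⨆ c, ⨆ τ' : X.Pd.el c,
          Q.comp ((((lamd X).app s ((cpsf p).app s T))).1 c τ')
            (X.P.hom t' c σ' (p.app c τ')))
        (X.P.hom a t' ((X.y).app a x) σ'))
  refine le_iSup_of_le b (le_iSup_of_le (p.app b τ₀) ?_)
  rw [P_hom_y]
  refine comp_le_comp ?_ le_rfl
  refine le_iSup_of_le b (le_iSup_of_le τ₀ ?_)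
  rw [lamd_app]
  calc X.P.Pd.hom b s ((cpsf X.y).app b τ₀) ((cpsf p).app s T)
      = Q.comp (X.P.Pd.hom b s ((cpsf X.y).app b τ₀) ((cpsf p).app s T)) (Q.idm b) :=
        (Q.comp_idm _).symm
    _ ≤ _ := comp_le_comp le_rfl (X.P.refl b (p.app b τ₀))

theorem key_hom {X : QCat Q} (p : QFun X.Pd X.P) {s} (τ : X.Pd.el s) {b} (τ₀ : X.Pd.el b)
    (u : Q.Hom b s)
    (hyp : ∀ (c : Q.Obj) (w : X.el c) (t : Q.Obj) (σ : X.P.el t),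
      Q.comp (X.P.hom c t (p.app c ((X.yd).app c w)) σ) (Q.comp (τ.1 c w) u)
        ≤ ((cpsf X.y).app b τ₀).1 t σ) :
    u ≤ X.P.Pd.hom b s ((cpsf X.y).app b τ₀) ((cpsf p).app s ((cpsf X.yd).app s τ)) := by
  refine le_iInf fun t => le_iInf fun σ => Quantaloid.le_rda.mp ?_
  rw [cpsf_p_val]
  simp only [Quantaloid.iSup_comp]
  refine iSup_le fun t' => iSup_le fun τ' => ?_
  rw [cpsf_yd_val]
  simp only [Quantaloid.comp_iSup, Quantaloid.iSup_comp]
  refine iSup_le fun c => iSup_le fun w => ?_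
  have h1 : X.Pd.hom c t' ((X.yd).app c w) τ'
      ≤ X.P.hom c t' (p.app c ((X.yd).app c w)) (p.app t' τ') := p.mono c t' _ _
  calc Q.comp (Q.comp (X.P.hom t' t (p.app t' τ') σ)
          (Q.comp (X.Pd.hom c t' ((X.yd).app c w) τ') (τ.1 c w))) u
      ≤ Q.comp (Q.comp (X.P.hom t' t (p.app t' τ') σ)
          (Q.comp (X.P.hom c t' (p.app c ((X.yd).app c w)) (p.app t' τ')) (τ.1 c w))) u :=
        comp_le_comp (comp_le_comp le_rfl (comp_le_comp h1 le_rfl)) le_rfl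
    _ = Q.comp (Q.comp (X.P.hom t' t (p.app t' τ') σ)
          (X.P.hom c t' (p.app c ((X.yd).app c w)) (p.app t' τ'))) (Q.comp (τ.1 c w) u) := by
        rw [Q.comp_assoc, Q.comp_assoc, ← Q.comp_assoc]
    _ ≤ Q.comp (X.P.hom c t (p.app c ((X.yd).app c w)) σ) (Q.comp (τ.1 c w) u) :=
        comp_le_comp (X.P.hom_comp_le _ _ _) le_rfl
    _ ≤ ((cpsf X.y).app b τ₀).1 t σ := hyp c w t σ

end Helpers

/-- for the strict distributive law `λ†` of `𝔓†` over `𝔓`,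
`(λ†,Q)-Alg ≅ Mon(Q-Dist)`: lax `λ†`-algebra structures `p : P†X → PX` on `X`
(laws (f), (g) for `T = P†`, `e = y†`, `m = s†`) correspond bijectively to monads
`α : X ⇸ X` in `Q`-Dist (via `p = α↓`, `α↓ τ = τ ↘ α`), and lax `λ†`-homomorphisms
are exactly the morphisms of `Mon(Q-Dist)`. -/
theorem statement9 (Q : Quantaloid.{u}) :
    -- every monad α in Q-Dist yields a lax λ†-algebra structure α↓
    (∀ (X : QCat Q) (α : QDist X X), X.homDist ≤ α → α.comp α ≤ α →
      (X.y ≤ (α.down).comp X.yd ∧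
        (supP X).comp ((pshf α.down).comp ((lamd X).comp (cpsf α.down)))
          ≤ (α.down).comp (infPd X))) ∧
    -- every lax λ†-algebra structure arises from a unique monad in Q-Dist
    (∀ (X : QCat Q) (p : QFun X.Pd X.P),
      (X.y ≤ p.comp X.yd ∧
        (supP X).comp ((pshf p).comp ((lamd X).comp (cpsf p))) ≤ p.comp (infPd X)) →
      ∃! α : QDist X X, (X.homDist ≤ α ∧ α.comp α ≤ α) ∧ α.down = p) ∧
    -- lax λ†-homomorphisms = morphisms of Mon(Q-Dist)
    (∀ (X Y : QCat Q) (α : QDist X X) (β : QDist Y Y) (f : QFun X Y),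
      (X.homDist ≤ α ∧ α.comp α ≤ α) → (Y.homDist ≤ β ∧ β.comp β ≤ β) →
      ((pshf f).comp α.down ≤ (β.down).comp (cpsf f) ↔
        ∀ p q (x : X.el p) (x' : X.el q),
          α.rel p q x x' ≤ β.rel p q (f.app p x) (f.app q x'))) := by
  refine ⟨?_, ?_, ?_⟩
  · -- Part 1: every monad yields a lax algebra
    intro X α hα1 hα2
    constructor
    · -- law (f)
      intro a x₀
      refine le_iInf fun b => le_iInf fun x' => idm_le_lda'.mpr ?_
      show X.hom b a x' x₀ ≤ ((α.down).app a ((X.yd).app a x₀)).1 b x'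
      rw [down_yd]
      exact hα1 b a x' x₀
    · -- law (g)
      rw [leP_iff]
      intro s T a x
      show ((((supP X).comp ((pshf α.down).comp ((lamd X).comp (cpsf α.down)))).app s T).1 a x)
        ≤ ((α.down).app s ((infPd X).app s T)).1 a x
      rw [down_spec]
      intro b z
      refine le_trans (Quantaloid.comp_le_comp le_rfl (F_le α.down T x)) ?_
      rw [infPd_val]
      rw [Quantaloid.iSup_comp]; refine iSup_le fun t => ?_
      rw [Quantaloid.iSup_comp]; refine iSup_le fun τ' => ?_
      rw [Quantaloid.comp_iSup]; refine iSup_le fun c => ?_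
      rw [Quantaloid.comp_iSup]; refine iSup_le fun τ₀ => ?_
      -- key bound: comp (T.1 t τ') (HOM) ≤ ⨆ c' z', comp ((α.down τ').1 c' z') (τ₀.1 c' z')
      have hTL : Q.comp (T.1 t τ')
          (X.P.Pd.hom c s ((cpsf X.y).app c τ₀) ((cpsf α.down).app s T))
          ≤ ⨆ c', ⨆ z' : X.el c',
              Q.comp (((α.down).app t τ').1 c' z') (τ₀.1 c' z') := by
        have h1 : T.1 t τ' ≤ ((cpsf α.down).app s T).1 t ((α.down).app t τ') := by
          rw [cpsf_p_val]
          refine le_iSup_of_le t (le_iSup_of_le τ' ?_)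
          calc T.1 t τ' = Q.comp (Q.idm t) (T.1 t τ') := (Q.idm_comp _).symm
            _ ≤ _ := Quantaloid.comp_le_comp (X.P.refl t ((α.down).app t τ')) le_rfl
        have h2 := Pd_hom_ev ((cpsf X.y).app c τ₀) ((cpsf α.down).app s T)
          (y := (α.down).app t τ')
        have h3 := le_trans (Quantaloid.comp_le_comp h1 le_rfl) h2
        rwa [cY_val] at h3
      calc Q.comp (Q.comp (τ'.1 b z) (T.1 t τ'))
              (Q.comp (X.P.Pd.hom c s ((cpsf X.y).app c τ₀) ((cpsf α.down).app s T))
                (((α.down).app c τ₀).1 a x))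
          = Q.comp (τ'.1 b z)
              (Q.comp (Q.comp (T.1 t τ')
                (X.P.Pd.hom c s ((cpsf X.y).app c τ₀) ((cpsf α.down).app s T)))
                (((α.down).app c τ₀).1 a x)) := by
            rw [Q.comp_assoc, ← Q.comp_assoc (T.1 t τ')]
        _ ≤ Q.comp (τ'.1 b z)
              (Q.comp (⨆ c', ⨆ z' : X.el c',
                  Q.comp (((α.down).app t τ').1 c' z') (τ₀.1 c' z'))
                (((α.down).app c τ₀).1 a x)) :=
            Quantaloid.comp_le_comp le_rfl (Quantaloid.comp_le_comp hTL le_rfl)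
        _ ≤ α.rel a b x z := by
            rw [Quantaloid.iSup_comp, Quantaloid.comp_iSup]
            refine iSup_le fun c' => ?_
            rw [Quantaloid.iSup_comp, Quantaloid.comp_iSup]
            refine iSup_le fun z' => ?_
            rw [Q.comp_assoc]
            calc Q.comp (τ'.1 b z) (Q.comp (((α.down).app t τ').1 c' z')
                    (Q.comp (τ₀.1 c' z') (((α.down).app c τ₀).1 a x)))
                ≤ Q.comp (τ'.1 b z) (Q.comp (((α.down).app t τ').1 c' z')
                    (α.rel a c' x z')) :=
                  Quantaloid.comp_le_comp le_rfl (Quantaloid.comp_le_comp le_rfl (down_comp_le α τ₀ x z'))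
              _ = Q.comp (Q.comp (τ'.1 b z) (((α.down).app t τ').1 c' z'))
                    (α.rel a c' x z') := (Q.comp_assoc _ _ _).symm
              _ ≤ Q.comp (α.rel c' b z' z) (α.rel a c' x z') :=
                  Quantaloid.comp_le_comp (down_comp_le α τ' z' z) le_rfl
              _ ≤ (α.comp α).rel a b x z :=
                  le_iSup_of_le c' (le_iSup_of_le z' le_rfl)
              _ ≤ α.rel a b x z := hα2 a b x z
  · -- Part 2
    intro X p hp
    obtain ⟨hf, hg⟩ := hp
    have hα1 : ∀ (b a : Q.Obj) (x' : X.el b) (x : X.el a),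
        X.hom b a x' x ≤ (p.app a ((X.yd).app a x)).1 b x' := by
      intro b a x' x
      exact idm_le_lda'.mp (le_trans (hf a x) (le_trans (iInf_le _ b) (iInf_le _ x')))
    refine ⟨QFun.untranspose (p.comp X.yd), ⟨⟨?_, ?_⟩, ?_⟩, ?_⟩
    · -- homDist ≤ α
      intro c d xc xd
      exact hα1 c d xc xd
    · -- α ∘ α ≤ α
      intro a r x z₀
      refine iSup₂_le fun b y => ?_
      show Q.comp ((p.app r ((X.yd).app r z₀)).1 b y) ((p.app b ((X.yd).app b y)).1 a x)
        ≤ (p.app r ((X.yd).app r z₀)).1 a x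
      have hL : (p.app r ((X.yd).app r z₀)).1 b y
          ≤ X.P.Pd.hom b r ((cpsf X.y).app b ((X.yd).app b y))
              ((cpsf p).app r ((cpsf X.yd).app r ((X.yd).app r z₀))) := by
        refine key_hom p ((X.yd).app r z₀) ((X.yd).app b y) _ ?_
        intro c w t σ
        have h2 : (((X.yd).app r z₀)).1 c w
            ≤ X.P.hom r c (p.app r ((X.yd).app r z₀)) (p.app c ((X.yd).app c w)) :=
          le_trans ((X.yd).mono r c z₀ w) (p.mono r c _ _)
        have h1 : Q.comp ((((X.yd).app r z₀)).1 c w) ((p.app r ((X.yd).app r z₀)).1 b y)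
            ≤ (p.app c ((X.yd).app c w)).1 b y :=
          le_trans (Quantaloid.comp_le_comp h2 le_rfl) (P_hom_ev _ _ y)
        calc Q.comp (X.P.hom c t (p.app c ((X.yd).app c w)) σ)
                (Q.comp ((((X.yd).app r z₀)).1 c w) ((p.app r ((X.yd).app r z₀)).1 b y))
            ≤ Q.comp (X.P.hom c t (p.app c ((X.yd).app c w)) σ)
                ((p.app c ((X.yd).app c w)).1 b y) := Quantaloid.comp_le_comp le_rfl h1
          _ ≤ σ.1 b y := P_hom_ev _ _ y
          _ ≤ ((cpsf X.y).app b ((X.yd).app b y)).1 t σ := by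
              rw [cY_val]
              refine le_iSup_of_le b (le_iSup_of_le y ?_)
              calc σ.1 b y = Q.comp (σ.1 b y) (Q.idm b) := (Q.comp_idm _).symm
                _ ≤ _ := Quantaloid.comp_le_comp le_rfl (X.refl b y)
      have step := le_trans (Quantaloid.comp_le_comp hL le_rfl)
        (F_ge p ((cpsf X.yd).app r ((X.yd).app r z₀)) x (τ₀ := (X.yd).app b y))
      have hgp := (leP_iff _ _).mp hg r ((cpsf X.yd).app r ((X.yd).app r z₀)) a x
      have hR : ((p.comp (infPd X)).app r ((cpsf X.yd).app r ((X.yd).app r z₀))).1 a x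
          = (p.app r ((X.yd).app r z₀)).1 a x := by
        show (p.app r ((infPd X).app r ((cpsf X.yd).app r ((X.yd).app r z₀)))).1 a x = _
        rw [infPd_cpsf_yd]
      exact le_trans step (le_trans hgp (le_of_eq hR))
    · -- α.down = p
      refine QFun_ext (funext fun s => funext fun τ => Subtype.ext
        (funext fun a => funext fun x => le_antisymm ?_ ?_))
      · -- down ≤ p
        have hL : (((QFun.untranspose (p.comp X.yd)).down).app s τ).1 a x
            ≤ X.P.Pd.hom a s ((cpsf X.y).app a ((X.yd).app a x))
                ((cpsf p).app s ((cpsf X.yd).app s τ)) := by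
          refine key_hom p τ ((X.yd).app a x) _ ?_
          intro c w t σ
          have h1 : Q.comp (τ.1 c w)
              ((((QFun.untranspose (p.comp X.yd)).down).app s τ).1 a x)
              ≤ (p.app c ((X.yd).app c w)).1 a x :=
            down_comp_le (QFun.untranspose (p.comp X.yd)) τ x w
          calc Q.comp (X.P.hom c t (p.app c ((X.yd).app c w)) σ)
                  (Q.comp (τ.1 c w)
                    ((((QFun.untranspose (p.comp X.yd)).down).app s τ).1 a x))
              ≤ Q.comp (X.P.hom c t (p.app c ((X.yd).app c w)) σ)
                  ((p.app c ((X.yd).app c w)).1 a x) := Quantaloid.comp_le_comp le_rfl h1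
            _ ≤ σ.1 a x := P_hom_ev _ _ x
            _ ≤ ((cpsf X.y).app a ((X.yd).app a x)).1 t σ := by
                rw [cY_val]
                refine le_iSup_of_le a (le_iSup_of_le x ?_)
                calc σ.1 a x = Q.comp (σ.1 a x) (Q.idm a) := (Q.comp_idm _).symm
                  _ ≤ _ := Quantaloid.comp_le_comp le_rfl (X.refl a x)
        have hid : Q.idm a ≤ (p.app a ((X.yd).app a x)).1 a x :=
          le_trans (X.refl a x) (hα1 a a x x)
        have step : (((QFun.untranspose (p.comp X.yd)).down).app s τ).1 a x
            ≤ Q.comp (X.P.Pd.hom a s ((cpsf X.y).app a ((X.yd).app a x))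
                ((cpsf p).app s ((cpsf X.yd).app s τ)))
              ((p.app a ((X.yd).app a x)).1 a x) := by
          calc (((QFun.untranspose (p.comp X.yd)).down).app s τ).1 a x
              = Q.comp ((((QFun.untranspose (p.comp X.yd)).down).app s τ).1 a x)
                  (Q.idm a) := (Q.comp_idm _).symm
            _ ≤ _ := Quantaloid.comp_le_comp hL hid
        have hgp := (leP_iff _ _).mp hg s ((cpsf X.yd).app s τ) a x
        have hR : ((p.comp (infPd X)).app s ((cpsf X.yd).app s τ)).1 a x
            = (p.app s τ).1 a x := by
          show (p.app s ((infPd X).app s ((cpsf X.yd).app s τ))).1 a x = _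
          rw [infPd_cpsf_yd]
        exact le_trans step (le_trans
          (F_ge p ((cpsf X.yd).app s τ) x (τ₀ := (X.yd).app a x))
          (le_trans hgp (le_of_eq hR)))
      · -- p ≤ down
        rw [down_spec]
        intro b y
        show Q.comp (τ.1 b y) ((p.app s τ).1 a x) ≤ (p.app b ((X.yd).app b y)).1 a x
        have h1 : τ.1 b y ≤ X.P.hom s b (p.app s τ) (p.app b ((X.yd).app b y)) := by
          rw [← Pd_hom_yd X τ y]
          exact p.mono s b τ ((X.yd).app b y)
        exact le_trans (Quantaloid.comp_le_comp h1 le_rfl) (P_hom_ev _ _ x)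
    · -- uniqueness
      intro α' hcond
      obtain ⟨⟨hα'1, hα'2⟩, hα'd⟩ := hcond
      apply le_antisymm
      · intro c d xc xd
        rw [← down_yd α' xc xd, hα'd]
        exact le_rfl
      · intro c d xc xd
        rw [← down_yd α' xc xd, hα'd]
        exact le_rfl
  · -- Part 3
    intro X Y α β f hα hβ
    obtain ⟨hα1, hα2⟩ := hα
    obtain ⟨hβ1, hβ2⟩ := hβ
    constructor
    · intro h a b x x'
      have h1 : α.rel a b x x'
          ≤ (((pshf f).comp α.down).app b ((X.yd).app b x')).1 a (f.app a x) := by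
        show α.rel a b x x' ≤ ⨆ c, ⨆ x₁ : X.el c,
          Q.comp (((α.down).app b ((X.yd).app b x')).1 c x₁)
            (Y.hom a c (f.app a x) (f.app c x₁))
        refine le_iSup_of_le a (le_iSup_of_le x ?_)
        rw [down_yd]
        calc α.rel a b x x' = Q.comp (α.rel a b x x') (Q.idm a) := (Q.comp_idm _).symm
          _ ≤ _ := Quantaloid.comp_le_comp le_rfl (Y.refl a (f.app a x))
      have h2 := (leP_iff _ _).mp h b ((X.yd).app b x') a (f.app a x)
      have h3 : (((β.down).comp (cpsf f)).app b ((X.yd).app b x')).1 a (f.app a x)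
          ≤ β.rel a b (f.app a x) (f.app b x') := by
        have hge : Q.idm b ≤ ((cpsf f).app b ((X.yd).app b x')).1 b (f.app b x') := by
          show Q.idm b ≤ ⨆ c, ⨆ x₁ : X.el c,
            Q.comp (Y.hom c b (f.app c x₁) (f.app b x')) (((X.yd).app b x').1 c x₁)
          refine le_iSup_of_le b (le_iSup_of_le x' ?_)
          calc Q.idm b = Q.comp (Q.idm b) (Q.idm b) := (Q.comp_idm _).symm
            _ ≤ _ := Quantaloid.comp_le_comp (Y.refl b (f.app b x')) (X.refl b x')
        calc (((β.down).comp (cpsf f)).app b ((X.yd).app b x')).1 a (f.app a x)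
            = Q.comp (Q.idm b)
                (((β.down).app b ((cpsf f).app b ((X.yd).app b x'))).1 a (f.app a x)) :=
              (Q.idm_comp _).symm
          _ ≤ Q.comp (((cpsf f).app b ((X.yd).app b x')).1 b (f.app b x'))
                (((β.down).app b ((cpsf f).app b ((X.yd).app b x'))).1 a (f.app a x)) :=
              Quantaloid.comp_le_comp hge le_rfl
          _ ≤ β.rel a b (f.app a x) (f.app b x') :=
              down_comp_le β _ (f.app a x) (f.app b x')
      exact le_trans h1 (le_trans h2 h3)
    · intro hm
      rw [leP_iff]
      intro s τ a yel
      show (⨆ c, ⨆ x₁ : X.el c,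
          Q.comp (((α.down).app s τ).1 c x₁) (Y.hom a c yel (f.app c x₁)))
        ≤ ((β.down).app s ((cpsf f).app s τ)).1 a yel
      refine iSup₂_le fun c x₁ => ?_
      rw [down_spec]
      intro b' y'
      show Q.comp (⨆ c', ⨆ x'' : X.el c',
          Q.comp (Y.hom c' b' (f.app c' x'') y') (τ.1 c' x''))
        (Q.comp (((α.down).app s τ).1 c x₁) (Y.hom a c yel (f.app c x₁)))
        ≤ β.rel a b' yel y'
      rw [Quantaloid.iSup_comp]; refine iSup_le fun c' => ?_
      rw [Quantaloid.iSup_comp]; refine iSup_le fun x'' => ?_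
      calc Q.comp (Q.comp (Y.hom c' b' (f.app c' x'') y') (τ.1 c' x''))
              (Q.comp (((α.down).app s τ).1 c x₁) (Y.hom a c yel (f.app c x₁)))
          = Q.comp (Y.hom c' b' (f.app c' x'') y')
              (Q.comp (Q.comp (τ.1 c' x'') (((α.down).app s τ).1 c x₁))
                (Y.hom a c yel (f.app c x₁))) := by
            rw [Q.comp_assoc, ← Q.comp_assoc (τ.1 c' x'')]
        _ ≤ Q.comp (Y.hom c' b' (f.app c' x'') y')
              (Q.comp (β.rel c c' (f.app c x₁) (f.app c' x''))
                (Y.hom a c yel (f.app c x₁))) :=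
            Quantaloid.comp_le_comp le_rfl (Quantaloid.comp_le_comp
              (le_trans (down_comp_le α τ x₁ x'') (hm c c' x₁ x'')) le_rfl)
        _ ≤ Q.comp (Y.hom c' b' (f.app c' x'') y') (β.rel a c' yel (f.app c' x'')) :=
            Quantaloid.comp_le_comp le_rfl (β.rel_comp_hom yel (f.app c x₁) (f.app c' x''))
        _ ≤ β.rel a b' yel y' := β.hom_comp_rel yel (f.app c' x'') y'

end QT
end

section
/- The double presheaf 2-monad 𝔓𝔓† = (PP†,Y,S) on Q-Cat distributes flatly over the presheaf 2-monad 𝔓 by the distributive law Λ given by Λ_X = ←(((y_X)_{†!})_*) = ((y_X)_{†!})^!·y_{PP†PX} = y_{PP†X}·((y_X)_†)^!:PP†PX→P(PP†X). -/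
/-!
Common framework: quantaloids, `Q`-categories, `Q`-functors, `Q`-distributors,
(co)presheaf constructions, 2-monads on `Q`-Cat, lax distributive laws over the
presheaf 2-monad, and lax extensions to `Q`-Dist.
-/

set_option autoImplicit false

universe u

namespace QT

variable {Q : Quantaloid.{u}}

section Aux
variable {Q : Quantaloid.{u}}
open Quantaloid

theorem QFun.ext {X Y : QCat Q} {f g : QFun X Y} (h : ∀ p x, f.app p x = g.app p x) :
    f = g := by
  obtain ⟨fa, fm⟩ := f; obtain ⟨ga, gm⟩ := g
  have he : fa = ga := funext fun p => funext fun x => h p x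
  subst he; rfl

theorem lda_mono_left {a b c : Q.Obj} {w w' : Q.Hom a c} (h : w ≤ w') (u : Q.Hom a b) :
    Quantaloid.lda w u ≤ Quantaloid.lda w' u :=
  sSup_le_sSup fun v hv => le_trans hv h

theorem rda_anti_left {a b c : Q.Obj} {v v' : Q.Hom b c} (h : v ≤ v') (w : Q.Hom a c) :
    Quantaloid.rda v' w ≤ Quantaloid.rda v w :=
  sSup_le_sSup fun u hu => le_trans (comp_le_comp h le_rfl) hu

theorem lda_app {a b c : Q.Obj} (w : Q.Hom a c) (u : Q.Hom a b) :
    Q.comp (Quantaloid.lda w u) u ≤ w := le_lda.mpr le_rfl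

theorem rda_app {a b c : Q.Obj} (v : Q.Hom b c) (w : Q.Hom a c) :
    Q.comp v (Quantaloid.rda v w) ≤ w := le_rda.mpr le_rfl

theorem P_hom (X : QCat Q) {s s' : Q.Obj} (σ : X.P.el s) (σ' : X.P.el s') :
    X.P.hom s s' σ σ' = ⨅ p, ⨅ x : X.el p, Quantaloid.lda (σ'.1 p x) (σ.1 p x) := rfl

theorem Pd_hom (X : QCat Q) {s s' : Q.Obj} (τ : X.Pd.el s) (τ' : X.Pd.el s') :
    X.Pd.hom s s' τ τ' = ⨅ q, ⨅ x : X.el q, Quantaloid.rda (τ'.1 q x) (τ.1 q x) := rfl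

theorem le_Phom {X : QCat Q} {s s' : Q.Obj} {σ : X.P.el s} {σ' : X.P.el s'} {u : Q.Hom s s'}
    (h : ∀ p (x : X.el p), Q.comp u (σ.1 p x) ≤ σ'.1 p x) : u ≤ X.P.hom s s' σ σ' :=
  le_iInf fun p => le_iInf fun x => le_lda.mp (h p x)

theorem le_Pdhom {X : QCat Q} {s s' : Q.Obj} {τ : X.Pd.el s} {τ' : X.Pd.el s'} {u : Q.Hom s s'}
    (h : ∀ q (x : X.el q), Q.comp (τ'.1 q x) u ≤ τ.1 q x) : u ≤ X.Pd.hom s s' τ τ' :=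
  le_iInf fun q => le_iInf fun x => le_rda.mp (h q x)

theorem Phom_le {X : QCat Q} {s s' : Q.Obj} (σ : X.P.el s) (σ' : X.P.el s')
    {p : Q.Obj} (x : X.el p) :
    X.P.hom s s' σ σ' ≤ Quantaloid.lda (σ'.1 p x) (σ.1 p x) :=
  le_trans (iInf_le _ p) (iInf_le _ x)

theorem Pdhom_le {X : QCat Q} {s s' : Q.Obj} (τ : X.Pd.el s) (τ' : X.Pd.el s')
    {q : Q.Obj} (x : X.el q) :
    X.Pd.hom s s' τ τ' ≤ Quantaloid.rda (τ'.1 q x) (τ.1 q x) :=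
  le_trans (iInf_le _ q) (iInf_le _ x)

theorem Phom_app {X : QCat Q} {s s' : Q.Obj} (σ : X.P.el s) (σ' : X.P.el s')
    {p : Q.Obj} (x : X.el p) :
    Q.comp (X.P.hom s s' σ σ') (σ.1 p x) ≤ σ'.1 p x :=
  le_trans (comp_le_comp (Phom_le σ σ' x) le_rfl) (lda_app _ _)

theorem Pdhom_app {X : QCat Q} {s s' : Q.Obj} (τ : X.Pd.el s) (τ' : X.Pd.el s')
    {q : Q.Obj} (x : X.el q) :
    Q.comp (τ'.1 q x) (X.Pd.hom s s' τ τ') ≤ τ.1 q x :=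
  le_trans (comp_le_comp le_rfl (Pdhom_le τ τ' x)) (rda_app _ _)

theorem Phom_mono_right {X : QCat Q} {s s' : Q.Obj} (ρ : X.P.el s) {σ σ' : X.P.el s'}
    (h : ∀ p (x : X.el p), σ.1 p x ≤ σ'.1 p x) :
    X.P.hom s s' ρ σ ≤ X.P.hom s s' ρ σ' :=
  iInf_mono fun p => iInf_mono fun x => lda_mono_left (h p x) _

/-- Pointwise criterion for `≤` of `Q`-functors into a presheaf category. -/
theorem leP_of_values {Z X : QCat Q} {F G : QFun Z X.P}
    (h : ∀ s (z : Z.el s) p (x : X.el p), (F.app s z).1 p x ≤ (G.app s z).1 p x) :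
    F ≤ G := by
  intro s z
  exact le_Phom fun p x => by
    rw [Q.idm_comp]; exact h s z p x

theorem pshb_app {X Y : QCat Q} (f : QFun X Y) {s : Q.Obj} (σ : Y.P.el s)
    {p : Q.Obj} (x : X.el p) :
    ((pshb f).app s σ).1 p x = σ.1 p (f.app p x) := by
  apply le_antisymm
  · exact iSup₂_le fun q y => σ.2 p q (f.app p x) y
  · calc σ.1 p (f.app p x) = Q.comp (σ.1 p (f.app p x)) (Q.idm p) := (Q.comp_idm _).symm
      _ ≤ Q.comp (σ.1 p (f.app p x)) (Y.hom p p (f.app p x) (f.app p x)) :=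
          comp_le_comp le_rfl (Y.refl p _)
      _ ≤ _ := by
          show _ ≤ ⨆ q, ⨆ y : Y.el q, Q.comp (σ.1 q y) (Y.hom p q (f.app p x) y)
          exact le_iSup_of_le p (le_iSup_of_le (f.app p x) le_rfl)

theorem cpsb_app {X Y : QCat Q} (f : QFun X Y) {s : Q.Obj} (τ : Y.Pd.el s)
    {q : Q.Obj} (x : X.el q) :
    ((cpsb f).app s τ).1 q x = τ.1 q (f.app q x) := by
  apply le_antisymm
  · exact iSup₂_le fun p y => τ.2 p q y (f.app q x)
  · calc τ.1 q (f.app q x) = Q.comp (Q.idm q) (τ.1 q (f.app q x)) := (Q.idm_comp _).symm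
      _ ≤ Q.comp (Y.hom q q (f.app q x) (f.app q x)) (τ.1 q (f.app q x)) :=
          comp_le_comp (Y.refl q _) le_rfl
      _ ≤ _ := by
          show _ ≤ ⨆ p, ⨆ y : Y.el p, Q.comp (Y.hom p q y (f.app q x)) (τ.1 p y)
          exact le_iSup_of_le q (le_iSup_of_le (f.app q x) le_rfl)

/-- Yoneda lemma. -/
theorem yoneda (X : QCat Q) {p s : Q.Obj} (x : X.el p) (σ : X.P.el s) :
    X.P.hom p s (X.y.app p x) σ = σ.1 p x := by
  apply le_antisymm
  · calc X.P.hom p s (X.y.app p x) σ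
        ≤ Quantaloid.lda (σ.1 p x) (X.hom p p x x) := Phom_le _ _ x
      _ ≤ σ.1 p x := by
          have h : Q.comp (Quantaloid.lda (σ.1 p x) (X.hom p p x x)) (X.hom p p x x)
              ≤ σ.1 p x := lda_app _ _
          calc Quantaloid.lda (σ.1 p x) (X.hom p p x x)
              = Q.comp (Quantaloid.lda (σ.1 p x) (X.hom p p x x)) (Q.idm p) :=
                (Q.comp_idm _).symm
            _ ≤ Q.comp (Quantaloid.lda (σ.1 p x) (X.hom p p x x)) (X.hom p p x x) :=
                comp_le_comp le_rfl (X.refl p x)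
            _ ≤ σ.1 p x := h
  · exact le_Phom fun q x' => σ.2 q p x' x

/-- Co-Yoneda inequality. -/
theorem hom_yd_le (X : QCat Q) {q p : Q.Obj} (υ : X.Pd.el q) (x : X.el p) :
    X.Pd.hom q p υ (X.yd.app p x) ≤ υ.1 p x := by
  have h1 : X.Pd.hom q p υ (X.yd.app p x)
      ≤ Quantaloid.rda (X.hom p p x x) (υ.1 p x) := Pdhom_le _ _ x
  have h2 : Q.comp (X.hom p p x x) (Quantaloid.rda (X.hom p p x x) (υ.1 p x))
      ≤ υ.1 p x := rda_app _ _
  calc X.Pd.hom q p υ (X.yd.app p x)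
      ≤ Quantaloid.rda (X.hom p p x x) (υ.1 p x) := h1
    _ = Q.comp (Q.idm p) (Quantaloid.rda (X.hom p p x x) (υ.1 p x)) := (Q.idm_comp _).symm
    _ ≤ Q.comp (X.hom p p x x) (Quantaloid.rda (X.hom p p x x) (υ.1 p x)) :=
        comp_le_comp (X.refl p x) le_rfl
    _ ≤ υ.1 p x := h2

end Aux
section Aux2
variable {Q : Quantaloid.{u}}
open Quantaloid

theorem le_iSup2 {α : Type*} [CompleteLattice α] {ι : Sort*} {κ : ι → Sort*}
    {f : ∀ i, κ i → α} {c : α} (i : ι) (j : κ i) (h : c ≤ f i j) :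
    c ≤ ⨆ i, ⨆ j, f i j := le_trans h (le_iSup₂ i j)

theorem pshf_val {X Y : QCat Q} (f : QFun X Y) {s : Q.Obj} (σ : X.P.el s)
    {q : Q.Obj} (y : Y.el q) :
    ((pshf f).app s σ).1 q y
      = ⨆ p, ⨆ x : X.el p, Q.comp (σ.1 p x) (Y.hom q p y (f.app p x)) := rfl

theorem cpsf_val {X Y : QCat Q} (f : QFun X Y) {s : Q.Obj} (τ : X.Pd.el s)
    {q : Q.Obj} (y : Y.el q) :
    ((cpsf f).app s τ).1 q y
      = ⨆ p, ⨆ x : X.el p, Q.comp (Y.hom p q (f.app p x) y) (τ.1 p x) := rfl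

theorem y_val (X : QCat Q) {p q : Q.Obj} (x : X.el p) (x' : X.el q) :
    (X.y.app p x).1 q x' = X.hom q p x' x := rfl

theorem yd_val (X : QCat Q) {p q : Q.Obj} (x : X.el p) (x' : X.el q) :
    (X.yd.app p x).1 q x' = X.hom p q x x' := rfl

/-- `f_! ∘ y_X = y_Y ∘ f` at the level of elements. -/
theorem pshf_y {X Y : QCat Q} (f : QFun X Y) {p : Q.Obj} (x : X.el p) :
    (pshf f).app p (X.y.app p x) = Y.y.app p (f.app p x) := by
  apply Subtype.ext; funext q y
  rw [pshf_val, y_val]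
  apply le_antisymm
  · refine iSup₂_le fun p' x' => ?_
    calc Q.comp (X.hom p' p x' x) (Y.hom q p' y (f.app p' x'))
        ≤ Q.comp (Y.hom p' p (f.app p' x') (f.app p x)) (Y.hom q p' y (f.app p' x')) :=
          comp_le_comp (f.mono p' p x' x) le_rfl
      _ ≤ Y.hom q p y (f.app p x) := Y.hom_comp_le _ _ _
  · calc (Y.y.app p (f.app p x)).1 q y
        = Q.comp (Q.idm p) (Y.hom q p y (f.app p x)) := (Q.idm_comp _).symm
      _ ≤ Q.comp (X.hom p p x x) (Y.hom q p y (f.app p x)) :=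
          comp_le_comp (X.refl p x) le_rfl
      _ ≤ _ := le_iSup2 p x le_rfl

theorem pshf_comp_y {X Y : QCat Q} (f : QFun X Y) :
    (pshf f).comp X.y = (QCat.y Y).comp f :=
  QFun.ext fun p x => pshf_y f x

/-- `cpsf` is functorial at the level of elements. -/
theorem cpsf_comp_app {X Y Z : QCat Q} (g : QFun Y Z) (h : QFun X Y)
    {s : Q.Obj} (τ : X.Pd.el s) :
    (cpsf (g.comp h)).app s τ = (cpsf g).app s ((cpsf h).app s τ) := by
  apply Subtype.ext; funext q z
  rw [cpsf_val, cpsf_val]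
  apply le_antisymm
  · refine iSup₂_le fun p x => ?_
    have hx : τ.1 p x ≤ ((cpsf h).app s τ).1 p (h.app p x) := by
      rw [cpsf_val]
      calc τ.1 p x = Q.comp (Q.idm p) (τ.1 p x) := (Q.idm_comp _).symm
        _ ≤ Q.comp (Y.hom p p (h.app p x) (h.app p x)) (τ.1 p x) :=
            comp_le_comp (Y.refl p _) le_rfl
        _ ≤ _ := le_iSup2 p x le_rfl
    exact le_iSup_of_le p (le_iSup_of_le (h.app p x) (comp_le_comp le_rfl hx))
  · refine iSup₂_le fun p' y => ?_
    rw [cpsf_val, Q.comp_iSup]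
    refine iSup_le fun p => ?_
    rw [Q.comp_iSup]
    refine iSup_le fun x => ?_
    refine le_iSup_of_le p (le_iSup_of_le x ?_)
    rw [← Q.comp_assoc]
    refine comp_le_comp ?_ le_rfl
    calc Q.comp (Z.hom p' q (g.app p' y) z) (Y.hom p p' (h.app p x) y)
        ≤ Q.comp (Z.hom p' q (g.app p' y) z)
            (Z.hom p p' (g.app p (h.app p x)) (g.app p' y)) :=
          comp_le_comp le_rfl (g.mono p p' (h.app p x) y)
      _ ≤ Z.hom p q (g.app p (h.app p x)) z := Z.hom_comp_le _ _ _

theorem cpsf_id_app {X : QCat Q} {s : Q.Obj} (τ : X.Pd.el s) :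
    (cpsf (QFun.id X)).app s τ = τ := by
  apply Subtype.ext; funext q y
  rw [cpsf_val]
  apply le_antisymm
  · exact iSup₂_le fun p x => τ.2 p q x y
  · calc τ.1 q y = Q.comp (Q.idm q) (τ.1 q y) := (Q.idm_comp _).symm
      _ ≤ Q.comp (X.hom q q y y) (τ.1 q y) := comp_le_comp (X.refl q y) le_rfl
      _ ≤ _ := le_iSup2 q y le_rfl

theorem supP_comp_y (X : QCat Q) : (supP X).comp (QCat.y X.P) = QFun.id X.P := by
  refine QFun.ext fun s σ => Subtype.ext (funext fun p => funext fun x => ?_)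
  show ((pshb X.y).app s ((QCat.y X.P).app s σ)).1 p x = σ.1 p x
  rw [pshb_app]
  exact yoneda X x σ

/-- Yoneda embedding is fully faithful. -/
theorem y_ff (X : QCat Q) {p q : Q.Obj} (x : X.el p) (x' : X.el q) :
    X.P.hom p q (X.y.app p x) (X.y.app q x') = X.hom p q x x' :=
  yoneda X x (X.y.app q x')

/-- For fully faithful `f`, `f^† ∘ f_† = id` at the level of elements. -/
theorem cpsb_cpsf_app {X Y : QCat Q} {f : QFun X Y} (hf : QFun.FullyFaithful f)
    {s : Q.Obj} (τ : X.Pd.el s) :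
    (cpsb f).app s ((cpsf f).app s τ) = τ := by
  apply Subtype.ext; funext q x
  rw [cpsb_app, cpsf_val]
  apply le_antisymm
  · refine iSup₂_le fun p x' => ?_
    rw [← hf p q x' x]
    exact τ.2 p q x' x
  · calc τ.1 q x = Q.comp (Q.idm q) (τ.1 q x) := (Q.idm_comp _).symm
      _ ≤ Q.comp (Y.hom q q (f.app q x) (f.app q x)) (τ.1 q x) :=
          comp_le_comp (le_trans (X.refl q x) (le_of_eq (hf q q x x))) le_rfl
      _ ≤ _ := le_iSup2 q x le_rfl

/-- For fully faithful `f`, `cpsf f` is fully faithful. -/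
theorem cpsf_ff {X Y : QCat Q} {f : QFun X Y} (hf : QFun.FullyFaithful f) :
    QFun.FullyFaithful (cpsf f) := by
  intro p q τ τ'
  apply le_antisymm
  · exact (cpsf f).mono p q τ τ'
  · calc Y.Pd.hom p q ((cpsf f).app p τ) ((cpsf f).app q τ')
        ≤ X.Pd.hom p q ((cpsb f).app p ((cpsf f).app p τ))
            ((cpsb f).app q ((cpsf f).app q τ')) := (cpsb f).mono p q _ _
      _ = X.Pd.hom p q τ τ' := by rw [cpsb_cpsf_app hf, cpsb_cpsf_app hf]

/-- For fully faithful `f`, `f^! ∘ f_! = id` at the level of elements. -/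
theorem pshb_pshf_app {X Y : QCat Q} {f : QFun X Y} (hf : QFun.FullyFaithful f)
    {s : Q.Obj} (ρ : X.P.el s) :
    (pshb f).app s ((pshf f).app s ρ) = ρ := by
  apply Subtype.ext; funext p x
  rw [pshb_app, pshf_val]
  apply le_antisymm
  · refine iSup₂_le fun p' x' => ?_
    rw [← hf p p' x x']
    exact ρ.2 p p' x x'
  · calc ρ.1 p x = Q.comp (ρ.1 p x) (Q.idm p) := (Q.comp_idm _).symm
      _ ≤ Q.comp (ρ.1 p x) (Y.hom p p (f.app p x) (f.app p x)) :=
          comp_le_comp le_rfl (le_trans (X.refl p x) (le_of_eq (hf p p x x)))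
      _ ≤ _ := le_iSup2 p x le_rfl

/-- The adjunction `f_! ⊣ f^!`, as an equality of presheaf homs. -/
theorem adj_hom {X Y : QCat Q} (f : QFun X Y) {p s : Q.Obj}
    (ρ : X.P.el p) (S : Y.P.el s) :
    Y.P.hom p s ((pshf f).app p ρ) S = X.P.hom p s ρ ((pshb f).app s S) := by
  apply le_antisymm
  · refine le_Phom fun q x => ?_
    rw [pshb_app]
    have h1 : ρ.1 q x ≤ ((pshf f).app p ρ).1 q (f.app q x) := by
      rw [pshf_val]
      refine le_iSup_of_le q (le_iSup_of_le x ?_)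
      calc ρ.1 q x = Q.comp (ρ.1 q x) (Q.idm q) := (Q.comp_idm _).symm
        _ ≤ _ := comp_le_comp le_rfl (Y.refl q _)
    exact le_trans (comp_le_comp le_rfl h1) (Phom_app _ _ (f.app q x))
  · refine le_Phom fun q y => ?_
    rw [pshf_val, Q.comp_iSup]
    refine iSup_le fun q' => ?_
    rw [Q.comp_iSup]
    refine iSup_le fun x => ?_
    rw [← Q.comp_assoc]
    have h1 : Q.comp (X.P.hom p s ρ ((pshb f).app s S)) (ρ.1 q' x) ≤ S.1 q' (f.app q' x) := by
      have := Phom_app ρ ((pshb f).app s S) x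
      rwa [pshb_app] at this
    exact le_trans (comp_le_comp h1 le_rfl) (S.2 q q' y (f.app q' x))

end Aux2
section Parts
variable {Q : Quantaloid.{u}}
open Quantaloid

theorem lam_part1 (X : QCat Q) :
    LamPPd X = ((pshf (cpsf X.y)).graph).transpose ∧
    LamPPd X = (pshb (pshf (cpsf X.y))).comp (QCat.y X.P.Pd.P) := by
  constructor
  · refine QFun.ext fun s Sg => Subtype.ext (funext fun p => funext fun ρ => ?_)
    show X.Pd.P.hom p s ρ ((pshb (cpsf X.y)).app s Sg)
      = X.P.Pd.P.hom p s ((pshf (cpsf X.y)).app p ρ) Sg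
    exact (adj_hom (cpsf X.y) ρ Sg).symm
  · refine QFun.ext fun s Sg => Subtype.ext (funext fun p => funext fun ρ => ?_)
    show X.Pd.P.hom p s ρ ((pshb (cpsf X.y)).app s Sg)
      = ((pshb (pshf (cpsf X.y))).app s ((QCat.y X.P.Pd.P).app s Sg)).1 p ρ
    rw [pshb_app]
    exact (adj_hom (cpsf X.y) ρ Sg).symm

theorem lam_partb (X : QCat Q) :
    (LamPPd X).comp (pshf (cpsf X.y)) = QCat.y X.Pd.P := by
  have hff : QFun.FullyFaithful (cpsf X.y) :=
    cpsf_ff (fun p q x x' => (y_ff X x x').symm)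
  refine QFun.ext fun p ρ => ?_
  show (QCat.y X.Pd.P).app p ((pshb (cpsf X.y)).app p ((pshf (cpsf X.y)).app p ρ))
      = (QCat.y X.Pd.P).app p ρ
  rw [pshb_pshf_app hff]

theorem lam_parta (X Y : QCat Q) (f : QFun X Y) :
    (pshf (pshf (cpsf f))).comp (LamPPd X) ≤ (LamPPd Y).comp (pshf (cpsf (pshf f))) := by
  refine leP_of_values fun s Sg p ρ => ?_
  show ((pshf (pshf (cpsf f))).app s
      ((QCat.y X.Pd.P).app s ((pshb (cpsf X.y)).app s Sg))).1 p ρ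
    ≤ (((LamPPd Y).comp (pshf (cpsf (pshf f)))).app s Sg).1 p ρ
  rw [pshf_y]
  show Y.Pd.P.hom p s ρ ((pshf (cpsf f)).app s ((pshb (cpsf X.y)).app s Sg))
    ≤ Y.Pd.P.hom p s ρ ((pshb (cpsf Y.y)).app s ((pshf (cpsf (pshf f))).app s Sg))
  refine Phom_mono_right ρ fun q τ => ?_
  rw [pshf_val, pshb_app, pshf_val]
  refine iSup₂_le fun p' υ => ?_
  rw [pshb_app]
  refine le_iSup2 p' ((cpsf X.y).app p' υ) (comp_le_comp le_rfl ?_)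
  have hnat : (cpsf (pshf f)).app p' ((cpsf X.y).app p' υ)
      = (cpsf Y.y).app p' ((cpsf f).app p' υ) := by
    rw [← cpsf_comp_app, pshf_comp_y f, cpsf_comp_app]
  rw [hnat]
  exact (cpsf Y.y).mono q p' τ _

theorem lam_partc (X : QCat Q) :
    (supP X.Pd.P).comp ((pshf (LamPPd X)).comp (LamPPd X.P))
      ≤ (LamPPd X).comp (pshf (cpsf (supP X))) := by
  refine leP_of_values fun s 𝔖 p ρ => ?_
  show ((supP X.Pd.P).app s ((pshf (LamPPd X)).app s
      ((QCat.y X.P.Pd.P).app s ((pshb (cpsf (QCat.y X.P))).app s 𝔖)))).1 p ρ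
    ≤ (((LamPPd X).comp (pshf (cpsf (supP X)))).app s 𝔖).1 p ρ
  rw [pshf_y]
  show ((pshb (QCat.y X.Pd.P)).app s ((QCat.y X.Pd.P.P).app s
      ((LamPPd X).app s ((pshb (cpsf (QCat.y X.P))).app s 𝔖)))).1 p ρ ≤ _
  rw [pshb_app]
  show X.Pd.P.P.hom p s ((QCat.y X.Pd.P).app p ρ) _ ≤ _
  rw [yoneda]
  show X.Pd.P.hom p s ρ
      ((pshb (cpsf X.y)).app s ((pshb (cpsf (QCat.y X.P))).app s 𝔖))
    ≤ X.Pd.P.hom p s ρ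
      ((pshb (cpsf X.y)).app s ((pshf (cpsf (supP X))).app s 𝔖))
  refine Phom_mono_right ρ fun p' υ => ?_
  rw [pshb_app, pshb_app, pshb_app, pshf_val]
  set θ := (cpsf X.y).app p' υ with hθ
  set Ξ₀ := (cpsf (QCat.y X.P)).app p' θ with hΞ
  refine le_iSup2 p' Ξ₀ ?_
  have hid : (cpsf (supP X)).app p' Ξ₀ = θ := by
    rw [hΞ, ← cpsf_comp_app, supP_comp_y, cpsf_id_app]
  rw [hid]
  calc 𝔖.1 p' Ξ₀ = Q.comp (𝔖.1 p' Ξ₀) (Q.idm p') := (Q.comp_idm _).symm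
    _ ≤ Q.comp (𝔖.1 p' Ξ₀) (X.P.Pd.hom p' p' θ θ) :=
        comp_le_comp le_rfl (X.P.Pd.refl p' θ)

end Parts
section Parts2
variable {Q : Quantaloid.{u}}
open Quantaloid

theorem lam_partd (X : QCat Q) :
    pshf ((QCat.y X.Pd).comp X.yd)
      ≤ (LamPPd X).comp ((QCat.y X.P.Pd).comp (QCat.yd X.P)) := by
  refine leP_of_values fun s σ q ρ => ?_
  show ((pshf ((QCat.y X.Pd).comp X.yd)).app s σ).1 q ρ
    ≤ X.Pd.P.hom q s ρ ((pshb (cpsf X.y)).app s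
        ((QCat.y X.P.Pd).app s ((QCat.yd X.P).app s σ)))
  rw [pshf_val]
  refine iSup₂_le fun p x => ?_
  refine le_Phom fun p' υ => ?_
  rw [pshb_app]
  show _ ≤ X.P.Pd.hom p' s ((cpsf X.y).app p' υ) ((QCat.yd X.P).app s σ)
  have step1 : Q.comp (X.Pd.P.hom q p ρ (((QCat.y X.Pd).comp X.yd).app p x)) (ρ.1 p' υ)
      ≤ υ.1 p x := by
    have h1 : X.Pd.P.hom q p ρ (((QCat.y X.Pd).comp X.yd).app p x)
        ≤ Quantaloid.lda (X.Pd.hom p' p υ (X.yd.app p x)) (ρ.1 p' υ) :=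
      Phom_le ρ _ υ
    exact le_trans (le_trans (comp_le_comp h1 le_rfl) (lda_app _ _)) (hom_yd_le X υ x)
  rw [Q.comp_assoc]
  refine le_trans (comp_le_comp le_rfl step1) ?_
  -- comp (σ.1 p x) (υ.1 p x) ≤ hom(cpsf y υ, yd σ)
  refine le_Pdhom fun q' σ' => ?_
  show Q.comp (X.P.hom s q' σ σ') (Q.comp (σ.1 p x) (υ.1 p x)) ≤ ((cpsf X.y).app p' υ).1 q' σ'
  rw [← Q.comp_assoc, cpsf_val]
  refine le_iSup2 p x ?_
  refine le_trans (comp_le_comp (Phom_app σ σ' x) le_rfl) ?_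
  exact comp_le_comp (le_of_eq (yoneda X x σ').symm) le_rfl

theorem lam_parte (X : QCat Q) :
    (pshf (Smult X)).comp ((LamPPd X.Pd.P).comp (pshf (cpsf (LamPPd X))))
      ≤ (LamPPd X).comp (Smult X.P) := by
  refine leP_of_values fun s 𝔉 p ρ => ?_
  show ((pshf (Smult X)).app s ((QCat.y X.Pd.P.Pd.P).app s
      ((pshb (cpsf (QCat.y X.Pd.P))).app s ((pshf (cpsf (LamPPd X))).app s 𝔉)))).1 p ρ
    ≤ (((LamPPd X).comp (Smult X.P)).app s 𝔉).1 p ρ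
  rw [pshf_y]
  show X.Pd.P.hom p s ρ ((Smult X).app s
      ((pshb (cpsf (QCat.y X.Pd.P))).app s ((pshf (cpsf (LamPPd X))).app s 𝔉)))
    ≤ X.Pd.P.hom p s ρ ((pshb (cpsf X.y)).app s ((Smult X.P).app s 𝔉))
  refine Phom_mono_right ρ fun p' υ => ?_
  set 𝔊 := (pshf (cpsf (LamPPd X))).app s 𝔉 with hG
  show ((pshb (QCat.y X.Pd)).app s ((pshb (QCat.yd X.Pd.P)).app s
      ((pshb (cpsf (QCat.y X.Pd.P))).app s 𝔊))).1 p' υ ≤ _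
  rw [pshb_app, pshb_app, pshb_app, pshb_app]
  show _ ≤ ((pshb (QCat.y X.P.Pd)).app s ((pshb (QCat.yd X.P.Pd.P)).app s 𝔉)).1 p'
      ((cpsf X.y).app p' υ)
  rw [pshb_app, pshb_app]
  set θ := (cpsf X.y).app p' υ with hθ
  set Ψ₀ := (QCat.yd X.P.Pd.P).app p' ((QCat.y X.P.Pd).app p' θ) with hΨ₀
  set CC := (cpsf (QCat.y X.Pd.P)).app p'
      ((QCat.yd X.Pd.P).app p' ((QCat.y X.Pd).app p' υ)) with hCC
  show (𝔊.1 p' CC) ≤ 𝔉.1 p' Ψ₀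
  rw [hG, pshf_val]
  refine iSup₂_le fun p'' Ψ => ?_
  refine le_trans (comp_le_comp le_rfl ?_) (𝔉.2 p' p'' Ψ₀ Ψ)
  -- hom_{Z.P.Pd}(CC, cpsf Λ Ψ) ≤ A.Pd.hom p' p'' Ψ₀ Ψ
  refine le_Pdhom fun q' Sg => ?_
  refine le_trans ?_ (le_of_eq (yoneda (X.P.Pd) θ Sg).symm)
  set Xi := (LamPPd X).app q' Sg with hΞ
  have hΨ : Ψ.1 q' Sg ≤ ((cpsf (LamPPd X)).app p'' Ψ).1 q' Xi := by
    rw [cpsf_val]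
    refine le_iSup2 q' Sg ?_
    calc Ψ.1 q' Sg = Q.comp (Q.idm q') (Ψ.1 q' Sg) := (Q.idm_comp _).symm
      _ ≤ Q.comp (X.Pd.P.P.hom q' q' ((LamPPd X).app q' Sg) ((LamPPd X).app q' Sg))
            (Ψ.1 q' Sg) := comp_le_comp (X.Pd.P.P.refl q' _) le_rfl
  have hstep : Q.comp (Ψ.1 q' Sg)
      (X.Pd.P.P.Pd.hom p' p'' CC ((cpsf (LamPPd X)).app p'' Ψ)) ≤ CC.1 q' Xi := by
    refine le_trans (comp_le_comp hΨ (Pdhom_le CC ((cpsf (LamPPd X)).app p'' Ψ) Xi)) ?_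
    exact rda_app _ _
  refine le_trans hstep ?_
  -- CC.1 q' Xi ≤ Sg.1 p' θ
  rw [hCC, cpsf_val]
  refine iSup₂_le fun p₃ τ => ?_
  have h1 : X.Pd.P.P.hom p₃ q' ((QCat.y X.Pd.P).app p₃ τ) Xi
      = X.Pd.P.hom p₃ q' τ ((pshb (cpsf X.y)).app q' Sg) := yoneda (X.Pd.P) τ Xi
  have h2 : ((QCat.yd X.Pd.P).app p' ((QCat.y X.Pd).app p' υ)).1 p₃ τ
      = X.Pd.P.hom p' p₃ ((QCat.y X.Pd).app p' υ) τ := rfl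
  rw [h1, h2]
  refine le_trans (X.Pd.P.hom_comp_le _ _ _) ?_
  rw [yoneda, pshb_app]

end Parts2
/-- the double presheaf 2-monad `𝔓𝔓† = (PP†, Y, S)` (with `T = PP†`,
`Tf = f_{†!}`, unit `Y_X = y_{P†X} ∘ y†_X` and multiplication
`S_X = s_{P†X} ∘ (y†_{PP†X})^!`) distributes flatly over the presheaf 2-monad by
`Λ_X = ←(((y_X)_{†!})_*) = ((y_X)_{†!})^! ∘ y_{PP†PX} = y_{PP†X} ∘ ((y_X)_†)^!`. -/
theorem statement10 (Q : Quantaloid.{u}) :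
    -- the three descriptions of Λ agree
    (∀ X : QCat Q,
      LamPPd X = ((pshf (cpsf X.y)).graph).transpose ∧
      LamPPd X = (pshb (pshf (cpsf X.y))).comp (QCat.y X.P.Pd.P)) ∧
    -- (a) lax naturality: (Tf)_! ∘ Λ_X ≤ Λ_Y ∘ T(f_!)
    (∀ (X Y : QCat Q) (f : QFun X Y),
      (pshf (pshf (cpsf f))).comp (LamPPd X) ≤ (LamPPd Y).comp (pshf (cpsf (pshf f)))) ∧
    -- (b) strict P-unit law (flatness): Λ_X ∘ T y_X = y_{TX}
    (∀ X : QCat Q, (LamPPd X).comp (pshf (cpsf X.y)) = QCat.y X.Pd.P) ∧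
    -- (c) lax P-multiplication law
    (∀ X : QCat Q,
      (supP X.Pd.P).comp ((pshf (LamPPd X)).comp (LamPPd X.P))
        ≤ (LamPPd X).comp (pshf (cpsf (supP X)))) ∧
    -- (d) lax T-unit law: (Y_X)_! ≤ Λ_X ∘ Y_{PX}
    (∀ X : QCat Q,
      pshf ((QCat.y X.Pd).comp X.yd)
        ≤ (LamPPd X).comp ((QCat.y X.P.Pd).comp (QCat.yd X.P))) ∧
    -- (e) lax T-multiplication law: (S_X)_! ∘ Λ_{TX} ∘ T Λ_X ≤ Λ_X ∘ S_{PX}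
    (∀ X : QCat Q,
      (pshf (Smult X)).comp ((LamPPd X.Pd.P).comp (pshf (cpsf (LamPPd X))))
        ≤ (LamPPd X).comp (Smult X.P)) := by
  exact ⟨lam_part1, lam_parta, lam_partb, lam_partc, lam_partd, lam_parte⟩

end QT
end
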